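/- Let X be a geodesic metric space, e ∈ X, and N a Morse gauge. If x, y ∈ X_e^{(N)} then any geodesic [x,y] is N'-Morse, where N' depends only on N. Consequently X_e^{(N)} is an N'-stable subset of X: every pair of points in X_e^{(N)} is connected by an N'-Morse geodesic in X. -/

import Mathlib

open Metric Set

/-- A `(λ, ε)`-quasi-geodesic defined on the interval `[a,b]`. -/
def IsQuasiGeodesicOn {X : Type*} [MetricSpace X] (lam eps a b : ℝ) (σ : ℝ → X) : Prop :=
  ∀ s ∈ Set.Icc a b, ∀ t ∈ Set.Icc a b,
    (1 / lam) * |s - t| - eps ≤ dist (σ s) (σ t) ∧ dist (σ s) (σ t) ≤ lam * |s - t| + eps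

/-- A geodesic segment from `x` to `y`, parametrized by arclength on `[0, dist x y]`. -/
def IsGeodesicSegment {X : Type*} [MetricSpace X] (γ : ℝ → X) (x y : X) : Prop :=
  γ 0 = x ∧ γ (dist x y) = y ∧
    ∀ s ∈ Set.Icc (0:ℝ) (dist x y), ∀ t ∈ Set.Icc (0:ℝ) (dist x y),
      dist (γ s) (γ t) = |s - t|

/-- A geodesic metric space: any two points are joined by a geodesic segment. -/
def GeodesicSpace (X : Type*) [MetricSpace X] : Prop :=
  ∀ x y : X, ∃ γ : ℝ → X, IsGeodesicSegment γ x y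

/-- A geodesic ray, parametrized by arclength on `[0, ∞)`. -/
def IsGeodesicRay {X : Type*} [MetricSpace X] (γ : ℝ → X) : Prop :=
  ∀ s ∈ Set.Ici (0:ℝ), ∀ t ∈ Set.Ici (0:ℝ), dist (γ s) (γ t) = |s - t|

/-- A set `im` (the image of a geodesic) is `N`-Morse for a Morse gauge `N : ℝ → ℝ → ℝ` if
every `(λ,ε)`-quasi-geodesic (`λ ≥ 1`, `ε ≥ 0`) with endpoints on `im` stays in the
`N λ ε`-neighborhood of `im`. -/
def IsMorseWith {X : Type*} [MetricSpace X] (N : ℝ → ℝ → ℝ) (im : Set X) : Prop :=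
  ∀ lam eps : ℝ, 1 ≤ lam → 0 ≤ eps → ∀ a b : ℝ, a ≤ b → ∀ σ : ℝ → X,
    IsQuasiGeodesicOn lam eps a b σ → σ a ∈ im → σ b ∈ im →
    ∀ t ∈ Set.Icc a b, Metric.infDist (σ t) im ≤ N lam eps

/-- An `N`-Morse geodesic ray. -/
def IsMorseRay {X : Type*} [MetricSpace X] (N : ℝ → ℝ → ℝ) (γ : ℝ → X) : Prop :=
  IsGeodesicRay γ ∧ IsMorseWith N (γ '' Set.Ici 0)

/-- An `N`-Morse geodesic segment from `x` to `y`. -/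
def IsMorseSegment {X : Type*} [MetricSpace X] (N : ℝ → ℝ → ℝ) (γ : ℝ → X) (x y : X) : Prop :=
  IsGeodesicSegment γ x y ∧ IsMorseWith N (γ '' Set.Icc 0 (dist x y))

/-- The stratum `X_e^{(N)}`: points of `X` joined to `e` by an `N`-Morse geodesic. -/
def stratum {X : Type*} [MetricSpace X] (N : ℝ → ℝ → ℝ) (e : X) : Set X :=
  {x | ∃ γ : ℝ → X, IsMorseSegment N γ e x}

namespace StratumStable

/- ## Constants -/

noncomputable def N0 (Nf : ℝ → ℝ → ℝ) (l e : ℝ) : ℝ := max (Nf l e) 0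

noncomputable def cM (Nf : ℝ → ℝ → ℝ) : ℝ := N0 Nf 3 2 + 1

noncomputable def cEps (Nf : ℝ → ℝ → ℝ) (eps : ℝ) : ℝ := eps + 2 * cM Nf

noncomputable def cD1 (Nf : ℝ → ℝ → ℝ) (lam eps : ℝ) : ℝ :=
  N0 Nf (2*lam+1) (cEps Nf eps + 2) + 1

noncomputable def cDp (Nf : ℝ → ℝ → ℝ) (lam eps : ℝ) : ℝ :=
  N0 Nf lam (cEps Nf eps) + 1

noncomputable def cD (Nf : ℝ → ℝ → ℝ) (lam eps : ℝ) : ℝ :=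
  max (cDp Nf lam eps) (cD1 Nf lam eps)

noncomputable def cLam (Nf : ℝ → ℝ → ℝ) (lam eps : ℝ) : ℝ :=
  2 * cEps Nf eps + lam*lam*(4 * cD Nf lam eps + 3 * cEps Nf eps)

noncomputable def cQ1 (Nf : ℝ → ℝ → ℝ) (lam eps : ℝ) : ℝ :=
  2 * cD1 Nf lam eps + 3 * cM Nf + cEps Nf eps

noncomputable def cQ2 (Nf : ℝ → ℝ → ℝ) (lam eps : ℝ) : ℝ :=
  cQ1 Nf lam eps + lam*lam*(2 * cQ1 Nf lam eps + cEps Nf eps) + cEps Nf eps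

noncomputable def cN' (Nf : ℝ → ℝ → ℝ) (lam eps : ℝ) : ℝ :=
  2 * cD Nf lam eps + 6 * cM Nf + cEps Nf eps + cLam Nf lam eps + cQ2 Nf lam eps + 10

section ConstFacts

variable (Nf : ℝ → ℝ → ℝ) {lam eps : ℝ}

lemma N0_nonneg (l e : ℝ) : 0 ≤ N0 Nf l e := le_max_right _ _

lemma cM_ge_one : 1 ≤ cM Nf := by
  have := N0_nonneg Nf 3 2; simp only [cM]; linarith

lemma cEps_nonneg (heps : 0 ≤ eps) : 0 ≤ cEps Nf eps := by
  have := cM_ge_one Nf; simp only [cEps]; linarith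

lemma cEps_ge (heps : 0 ≤ eps) : eps ≤ cEps Nf eps := by
  have := cM_ge_one Nf; simp only [cEps]; linarith

lemma cD1_ge_one : 1 ≤ cD1 Nf lam eps := by
  have := N0_nonneg Nf (2*lam+1) (cEps Nf eps + 2); simp only [cD1]; linarith

lemma cDp_ge_one : 1 ≤ cDp Nf lam eps := by
  have := N0_nonneg Nf lam (cEps Nf eps); simp only [cDp]; linarith

lemma cD_ge_one : 1 ≤ cD Nf lam eps := le_trans (cDp_ge_one Nf) (le_max_left _ _)

lemma cDp_le_cD : cDp Nf lam eps ≤ cD Nf lam eps := le_max_left _ _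

lemma cD1_le_cD : cD1 Nf lam eps ≤ cD Nf lam eps := le_max_right _ _

lemma cLam_nonneg (hlam : 1 ≤ lam) (heps : 0 ≤ eps) : 0 ≤ cLam Nf lam eps := by
  have h1 := cEps_nonneg Nf heps
  have h2 := cD_ge_one Nf (lam := lam) (eps := eps)
  have h3 : (0:ℝ) ≤ lam * lam := by nlinarith
  simp only [cLam]; nlinarith

lemma cQ1_nonneg (heps : 0 ≤ eps) : 0 ≤ cQ1 Nf lam eps := by
  have h1 := cEps_nonneg Nf heps
  have h2 := cD1_ge_one Nf (lam := lam) (eps := eps)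
  have h3 := cM_ge_one Nf
  simp only [cQ1]; linarith

lemma cQ2_nonneg (hlam : 1 ≤ lam) (heps : 0 ≤ eps) : 0 ≤ cQ2 Nf lam eps := by
  have h1 := cEps_nonneg Nf heps
  have h2 := cQ1_nonneg Nf (lam := lam) heps
  have h3 : (0:ℝ) ≤ lam * lam := by nlinarith
  simp only [cQ2]; nlinarith

lemma cN'_nonneg (hlam : 1 ≤ lam) (heps : 0 ≤ eps) : 0 ≤ cN' Nf lam eps := by
  have h1 := cEps_nonneg Nf heps
  have h2 := cD_ge_one Nf (lam := lam) (eps := eps)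
  have h3 := cM_ge_one Nf
  have h4 := cLam_nonneg Nf hlam heps
  have h5 := cQ2_nonneg Nf hlam heps
  simp only [cN']; linarith

end ConstFacts

/- ## Quasi-geodesic basics -/

section QG

variable {X : Type*} [MetricSpace X]

theorem qg_of_le {lam eps a b : ℝ} {σ : ℝ → X}
    (h : ∀ s ∈ Set.Icc a b, ∀ t ∈ Set.Icc a b, s ≤ t →
      (1 / lam) * |s - t| - eps ≤ dist (σ s) (σ t) ∧
        dist (σ s) (σ t) ≤ lam * |s - t| + eps) :
    IsQuasiGeodesicOn lam eps a b σ := by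
  intro s hs t ht
  rcases le_total s t with hst | hst
  · exact h s hs t ht hst
  · have H := h t ht s hs hst
    rw [dist_comm (σ t) (σ s), abs_sub_comm t s] at H
    exact H

theorem qg_mono {lam eps lam' eps' a b : ℝ} {σ : ℝ → X}
    (hlam : 0 < lam) (hll : lam ≤ lam') (hee : eps ≤ eps')
    (h : IsQuasiGeodesicOn lam eps a b σ) :
    IsQuasiGeodesicOn lam' eps' a b σ := by
  intro s hs t ht
  obtain ⟨h1, h2⟩ := h s hs t ht
  have hlam' : 0 < lam' := lt_of_lt_of_le hlam hll
  have habs : 0 ≤ |s - t| := abs_nonneg _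
  constructor
  · have : 1 / lam' * |s - t| ≤ 1 / lam * |s - t| := by
      apply mul_le_mul_of_nonneg_right _ habs
      exact one_div_le_one_div_of_le hlam hll
    linarith
  · have : lam * |s - t| ≤ lam' * |s - t| := mul_le_mul_of_nonneg_right hll habs
    linarith

theorem qg_restrict {lam eps a b a' b' : ℝ} {σ : ℝ → X}
    (hsub : Set.Icc a' b' ⊆ Set.Icc a b)
    (h : IsQuasiGeodesicOn lam eps a b σ) :
    IsQuasiGeodesicOn lam eps a' b' σ :=
  fun s hs t ht => h s (hsub hs) t (hsub ht)

theorem qg_reverse {lam eps a b : ℝ} {σ : ℝ → X}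
    (h : IsQuasiGeodesicOn lam eps a b σ) :
    IsQuasiGeodesicOn lam eps a b (fun t => σ (a + b - t)) := by
  intro s hs t ht
  have hs' : a + b - s ∈ Set.Icc a b := ⟨by linarith [hs.2], by linarith [hs.1]⟩
  have ht' : a + b - t ∈ Set.Icc a b := ⟨by linarith [ht.2], by linarith [ht.1]⟩
  have H := h _ hs' _ ht'
  have habs : |(a + b - s) - (a + b - t)| = |s - t| := by
    rw [show (a + b - s) - (a + b - t) = -(s - t) by ring, abs_neg]
  rw [habs] at H
  exact H

theorem geo_qg {c d : ℝ} {γ : ℝ → X}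
    (h : ∀ s ∈ Set.Icc c d, ∀ t ∈ Set.Icc c d, dist (γ s) (γ t) = |s - t|) :
    IsQuasiGeodesicOn 1 0 c d γ := by
  intro s hs t ht
  rw [h s hs t ht]
  norm_num

/-- Perturbing a quasi-geodesic at its two endpoints. -/
noncomputable def pert (σ : ℝ → X) (a b : ℝ) (u v : X) : ℝ → X :=
  fun t => if t = a then u else if t = b then v else σ t

theorem pert_left (σ : ℝ → X) (a b : ℝ) (u v : X) : pert σ a b u v a = u := by
  simp [pert]

theorem pert_right (σ : ℝ → X) {a b : ℝ} (hab : a ≠ b) (u v : X) :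
    pert σ a b u v b = v := by
  simp [pert, Ne.symm hab]

theorem pert_dist {σ : ℝ → X} {a b M : ℝ} (hM : 0 ≤ M) {u v : X}
    (hu : dist u (σ a) ≤ M) (hv : dist v (σ b) ≤ M) (t : ℝ) :
    dist (pert σ a b u v t) (σ t) ≤ M := by
  unfold pert
  split_ifs with h1 h2
  · subst h1; exact hu
  · subst h2; exact hv
  · simpa using hM

theorem pert_qg {lam eps a b M : ℝ} {σ : ℝ → X} (hM : 0 ≤ M)
    (hqg : IsQuasiGeodesicOn lam eps a b σ) {u v : X}
    (hu : dist u (σ a) ≤ M) (hv : dist v (σ b) ≤ M) :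
    IsQuasiGeodesicOn lam (eps + 2*M) a b (pert σ a b u v) := by
  intro s hs t ht
  obtain ⟨h1, h2⟩ := hqg s hs t ht
  have e1 := pert_dist hM hu hv s
  have e2 := pert_dist hM hu hv t
  have t1 : dist (σ s) (σ t) ≤
      dist (σ s) (pert σ a b u v s) + dist (pert σ a b u v s) (pert σ a b u v t)
        + dist (pert σ a b u v t) (σ t) := dist_triangle4 _ _ _ _
  have t2 : dist (pert σ a b u v s) (pert σ a b u v t) ≤
      dist (pert σ a b u v s) (σ s) + dist (σ s) (σ t) + dist (σ t) (pert σ a b u v t) :=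
    dist_triangle4 _ _ _ _
  rw [dist_comm (σ s) (pert σ a b u v s)] at t1
  rw [dist_comm (σ t) (pert σ a b u v t)] at t2
  constructor
  · linarith
  · linarith


theorem crossing_sup (φ : ℝ → ℝ) (lam eps t0 t1 V : ℝ) (hlam : 0 < lam) (heps : 0 ≤ eps)
    (h01 : t0 ≤ t1)
    (Hc : ∀ s ∈ Set.Icc t0 t1, ∀ t ∈ Set.Icc t0 t1, |φ s - φ t| ≤ lam * |s - t| + eps)
    (h0 : φ t0 ≤ V) :
    ∃ t' ∈ Set.Icc t0 t1, φ t' ≤ V + eps ∧ (V - eps ≤ φ t' ∨ t' = t1) ∧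
      ∀ u ∈ Set.Icc t0 t1, t' < u → V < φ u := by
  set S := {s : ℝ | s ∈ Set.Icc t0 t1 ∧ φ s ≤ V} with hSdef
  have hmem0 : t0 ∈ S := ⟨⟨le_refl _, h01⟩, h0⟩
  have hne : S.Nonempty := ⟨t0, hmem0⟩
  have hbdd : BddAbove S := ⟨t1, fun s hs => hs.1.2⟩
  set c := sSup S with hc
  have hc0 : t0 ≤ c := le_csSup hbdd hmem0
  have hc1 : c ≤ t1 := csSup_le hne (fun s hs => hs.1.2)
  have hcI : c ∈ Set.Icc t0 t1 := ⟨hc0, hc1⟩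
  refine ⟨c, hcI, ?_, ?_, ?_⟩
  · -- φ c ≤ V + eps
    apply le_of_forall_pos_le_add
    intro δ hδ
    obtain ⟨s, hsS, hs⟩ := exists_lt_of_lt_csSup hne (show c - δ/lam < c by
      have : 0 < δ / lam := div_pos hδ hlam
      linarith)
    have hsc : s ≤ c := le_csSup hbdd hsS
    have h1 := Hc c hcI s hsS.1
    have habs : |c - s| ≤ δ / lam := by
      rw [abs_of_nonneg (by linarith)]; linarith
    have h2 : lam * |c - s| ≤ δ := by
      have := mul_le_mul_of_nonneg_left habs (le_of_lt hlam)
      rwa [mul_div_cancel₀ δ (ne_of_gt hlam)] at this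
    have h3 : φ c - φ s ≤ |φ c - φ s| := le_abs_self _
    have h4 : φ s ≤ V := hsS.2
    linarith
  · -- V - eps ≤ φ c ∨ c = t1
    rcases eq_or_lt_of_le hc1 with heq | hlt
    · exact Or.inr heq
    · left
      apply le_of_forall_pos_le_add
      intro δ hδ
      set u := min t1 (c + δ/lam) with hu
      have hcu : c < u := by
        apply lt_min hlt
        have : 0 < δ / lam := div_pos hδ hlam
        linarith
      have huI : u ∈ Set.Icc t0 t1 := ⟨le_trans hc0 (le_of_lt hcu), min_le_left _ _⟩
      have hunotS : u ∉ S := fun h => absurd (le_csSup hbdd h) (not_le.mpr hcu)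
      have hVu : V < φ u := by
        by_contra h
        exact hunotS ⟨huI, le_of_not_gt h⟩
      have habs : |c - u| ≤ δ / lam := by
        rw [abs_of_nonpos (by linarith)]
        have : u ≤ c + δ/lam := min_le_right _ _
        linarith
      have h2 : lam * |c - u| ≤ δ := by
        have := mul_le_mul_of_nonneg_left habs (le_of_lt hlam)
        rwa [mul_div_cancel₀ δ (ne_of_gt hlam)] at this
      have h1 := Hc c hcI u huI
      have h3 : φ u - φ c ≤ |φ c - φ u| := by
        rw [abs_sub_comm]; exact le_abs_self _
      linarith
  · -- ∀ u ∈ Icc, c < u → V < φ u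
    intro u huI hcu
    by_contra h
    exact absurd (le_csSup hbdd ⟨huI, le_of_not_gt h⟩) (not_le.mpr hcu)

theorem crossing_inf (φ : ℝ → ℝ) (lam eps t0 t1 V : ℝ) (hlam : 0 < lam) (heps : 0 ≤ eps)
    (h01 : t0 ≤ t1)
    (Hc : ∀ s ∈ Set.Icc t0 t1, ∀ t ∈ Set.Icc t0 t1, |φ s - φ t| ≤ lam * |s - t| + eps)
    (h1 : φ t1 ≤ V) :
    ∃ t' ∈ Set.Icc t0 t1, φ t' ≤ V + eps ∧ (V - eps ≤ φ t' ∨ t' = t0) ∧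
      ∀ u ∈ Set.Icc t0 t1, u < t' → V < φ u := by
  have Hc' : ∀ s ∈ Set.Icc t0 t1, ∀ t ∈ Set.Icc t0 t1,
      |(fun r => φ (t0 + t1 - r)) s - (fun r => φ (t0 + t1 - r)) t| ≤ lam * |s - t| + eps := by
    intro s hs t ht
    have hs' : t0 + t1 - s ∈ Set.Icc t0 t1 := ⟨by linarith [hs.2], by linarith [hs.1]⟩
    have ht' : t0 + t1 - t ∈ Set.Icc t0 t1 := ⟨by linarith [ht.2], by linarith [ht.1]⟩
    have := Hc _ hs' _ ht'
    have habs : |(t0 + t1 - s) - (t0 + t1 - t)| = |s - t| := by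
      rw [show (t0 + t1 - s) - (t0 + t1 - t) = -(s - t) by ring, abs_neg]
    rwa [habs] at this
  obtain ⟨c, hcI, hA, hB, hC⟩ := crossing_sup (fun r => φ (t0 + t1 - r)) lam eps t0 t1 V
    hlam heps h01 Hc' (by simpa using h1)
  refine ⟨t0 + t1 - c, ⟨by linarith [hcI.2], by linarith [hcI.1]⟩, ?_, ?_, ?_⟩
  · simpa using hA
  · rcases hB with h | h
    · exact Or.inl (by simpa using h)
    · right; rw [h]; ring
  · intro u huI hu
    have huI' : t0 + t1 - u ∈ Set.Icc t0 t1 := ⟨by linarith [huI.2], by linarith [huI.1]⟩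
    have := hC (t0 + t1 - u) huI' (by linarith)
    simpa using this


/-- Pinch lemma (upper): a quasi-geodesic whose points fellow-travel a line
(recorded by the "height function" φ) cannot rise much above its endpoint heights. -/
theorem pinch_upper {τ : ℝ → X} {φ : ℝ → ℝ} {lam eps D t0 t1 : ℝ}
    (hlam : 1 ≤ lam) (heps : 0 ≤ eps) (hD : 0 ≤ D) (h01 : t0 ≤ t1)
    (hqg : IsQuasiGeodesicOn lam eps t0 t1 τ)
    (hφlip : ∀ s ∈ Set.Icc t0 t1, ∀ t ∈ Set.Icc t0 t1, |φ s - φ t| ≤ dist (τ s) (τ t))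
    (hnear : ∀ s ∈ Set.Icc t0 t1, ∀ t ∈ Set.Icc t0 t1,
      dist (τ s) (τ t) ≤ 4*D + |φ s - φ t|) :
    ∀ t ∈ Set.Icc t0 t1,
      φ t ≤ max (φ t0) (φ t1) + (2*eps + lam*lam*(4*D + 3*eps)) := by
  intro t htI
  set V := max (φ t0) (φ t1) with hV
  set Λ := 2*eps + lam*lam*(4*D + 3*eps) with hΛ
  have hlam0 : (0:ℝ) < lam := by linarith
  have hΛeps : eps ≤ Λ := by nlinarith
  by_contra hgt
  push_neg at hgt
  have hsub1 : Set.Icc t0 t ⊆ Set.Icc t0 t1 := Set.Icc_subset_Icc le_rfl htI.2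
  have hsub2 : Set.Icc t t1 ⊆ Set.Icc t0 t1 := Set.Icc_subset_Icc htI.1 le_rfl
  have Hc : ∀ s ∈ Set.Icc t0 t1, ∀ u ∈ Set.Icc t0 t1, |φ s - φ u| ≤ lam * |s - u| + eps :=
    fun s hs u hu => le_trans (hφlip s hs u hu) (hqg s hs u hu).2
  obtain ⟨t', ht'I, hA1, hB1, _⟩ := crossing_sup φ lam eps t0 t V hlam0 heps htI.1
    (fun s hs u hu => Hc s (hsub1 hs) u (hsub1 hu)) (le_max_left _ _)
  obtain ⟨t'', ht''I, hA2, hB2, _⟩ := crossing_inf φ lam eps t t1 V hlam0 heps htI.2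
    (fun s hs u hu => Hc s (hsub2 hs) u (hsub2 hu)) (le_max_right _ _)
  have ht'I' : t' ∈ Set.Icc t0 t1 := hsub1 ht'I
  have ht''I' : t'' ∈ Set.Icc t0 t1 := hsub2 ht''I
  -- dispose of degenerate disjuncts
  have hB1' : V - eps ≤ φ t' := by
    rcases hB1 with h | h
    · exact h
    · exfalso; rw [h] at hA1; exact absurd hA1 (by linarith)
  have hB2' : V - eps ≤ φ t'' := by
    rcases hB2 with h | h
    · exact h
    · exfalso; rw [h] at hA2; exact absurd hA2 (by linarith)
  -- now the pinch
  have habsφ : |φ t' - φ t''| ≤ 2*eps := by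
    rw [abs_le]; constructor <;> linarith
  have hd : dist (τ t') (τ t'') ≤ 4*D + 2*eps :=
    le_trans (hnear t' ht'I' t'' ht''I') (by linarith)
  have hlow := (hqg t' ht'I' t'' ht''I').1
  have ht't'' : t' ≤ t'' := le_trans ht'I.2 ht''I.1
  have habs : |t' - t''| = t'' - t' := by
    rw [abs_sub_comm, abs_of_nonneg (by linarith)]
  rw [habs] at hlow
  have h5 : (1/lam) * (t'' - t') ≤ 4*D + 3*eps := by linarith
  have h6 : t'' - t' ≤ lam * (4*D + 3*eps) := by
    have := mul_le_mul_of_nonneg_left h5 (le_of_lt hlam0)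
    rw [← mul_assoc, mul_one_div_cancel (ne_of_gt hlam0), one_mul] at this
    linarith
  have hup := (hqg t' ht'I' t htI).2
  have habst : |t' - t| = t - t' := by
    rw [abs_sub_comm, abs_of_nonneg (by linarith [ht'I.2])]
  rw [habst] at hup
  have h7 : t - t' ≤ t'' - t' := by linarith [ht''I.1]
  have h8 : dist (τ t') (τ t) ≤ lam * (lam * (4*D + 3*eps)) + eps := by
    have : lam * (t - t') ≤ lam * (lam * (4*D + 3*eps)) :=
      mul_le_mul_of_nonneg_left (by linarith) (le_of_lt hlam0)
    linarith
  have h9 := hφlip t htI t' ht'I'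
  have h10 : φ t - φ t' ≤ |φ t - φ t'| := le_abs_self _
  rw [dist_comm (τ t) (τ t')] at h9
  have : φ t ≤ V + Λ := by
    have : φ t ≤ φ t' + (lam * (lam * (4*D + 3*eps)) + eps) := by linarith
    have hmul : lam * (lam * (4*D + 3*eps)) = lam*lam*(4*D+3*eps) := by ring
    rw [hmul] at this
    linarith
  linarith

theorem pinch_lower {τ : ℝ → X} {φ : ℝ → ℝ} {lam eps D t0 t1 : ℝ}
    (hlam : 1 ≤ lam) (heps : 0 ≤ eps) (hD : 0 ≤ D) (h01 : t0 ≤ t1)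
    (hqg : IsQuasiGeodesicOn lam eps t0 t1 τ)
    (hφlip : ∀ s ∈ Set.Icc t0 t1, ∀ t ∈ Set.Icc t0 t1, |φ s - φ t| ≤ dist (τ s) (τ t))
    (hnear : ∀ s ∈ Set.Icc t0 t1, ∀ t ∈ Set.Icc t0 t1,
      dist (τ s) (τ t) ≤ 4*D + |φ s - φ t|) :
    ∀ t ∈ Set.Icc t0 t1,
      min (φ t0) (φ t1) - (2*eps + lam*lam*(4*D + 3*eps)) ≤ φ t := by
  have hφlip' : ∀ s ∈ Set.Icc t0 t1, ∀ t ∈ Set.Icc t0 t1,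
      |(fun r => -φ r) s - (fun r => -φ r) t| ≤ dist (τ s) (τ t) := by
    intro s hs t ht
    have : (fun r => -φ r) s - (fun r => -φ r) t = -(φ s - φ t) := by ring
    rw [this, abs_neg]
    exact hφlip s hs t ht
  have hnear' : ∀ s ∈ Set.Icc t0 t1, ∀ t ∈ Set.Icc t0 t1,
      dist (τ s) (τ t) ≤ 4*D + |(fun r => -φ r) s - (fun r => -φ r) t| := by
    intro s hs t ht
    have : (fun r => -φ r) s - (fun r => -φ r) t = -(φ s - φ t) := by ring
    rw [this, abs_neg]
    exact hnear s hs t ht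
  intro t htI
  have := pinch_upper hlam heps hD h01 hqg hφlip' hnear' t htI
  simp only [max_neg_neg] at this  -- hope: max (-a) (-b) = -min a b rewriting
  linarith [this]


theorem dist_param_e {g : ℝ → X} {G : ℝ} (e : X) (hg0 : g 0 = e) (hG : 0 ≤ G)
    (hgiso : ∀ s ∈ Set.Icc (0:ℝ) G, ∀ t ∈ Set.Icc (0:ℝ) G, dist (g s) (g t) = |s - t|)
    {r : ℝ} (hr : r ∈ Set.Icc 0 G) : dist (g r) e = r := by
  have h := hgiso r hr 0 ⟨le_refl _, hG⟩
  rw [hg0] at h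
  rw [h, sub_zero, abs_of_nonneg hr.1]


theorem extract_witness (e : X) {g : ℝ → X} {G : ℝ} (hG : 0 ≤ G) (hg0 : g 0 = e)
    (hgiso : ∀ s ∈ Set.Icc (0:ℝ) G, ∀ t ∈ Set.Icc (0:ℝ) G, dist (g s) (g t) = |s - t|)
    {z : X} {Nb : ℝ} (h : Metric.infDist z (g '' Set.Icc 0 G) ≤ Nb) :
    ∃ r, r ∈ Set.Icc 0 G ∧ dist z (g r) ≤ max Nb 0 + 1 ∧
      |r - dist z e| ≤ max Nb 0 + 1 := by
  have h2 : Metric.infDist z (g '' Set.Icc 0 G) < max Nb 0 + 1 := by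
    have : Nb ≤ max Nb 0 := le_max_left _ _
    linarith
  have hne : (g '' Set.Icc 0 G).Nonempty := ⟨g 0, 0, ⟨le_refl _, hG⟩, rfl⟩
  obtain ⟨w, hw, hdw⟩ := (Metric.infDist_lt_iff hne).mp h2
  obtain ⟨r, hrI, hrz⟩ := hw
  rw [← hrz] at hdw
  refine ⟨r, hrI, le_of_lt hdw, ?_⟩
  have hge : dist (g r) e = r := dist_param_e e hg0 hG hgiso hrI
  have habs2 : |dist (g r) e - dist z e| ≤ dist (g r) z := abs_dist_sub_le _ _ _
  rw [hge, dist_comm (g r) z] at habs2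
  exact le_trans habs2 (le_of_lt hdw)


theorem exists_approx_min (φ : ℝ → ℝ) {a b : ℝ} (hab : a ≤ b)
    (hpos : ∀ t ∈ Set.Icc a b, 0 ≤ φ t) :
    ∃ tw ∈ Set.Icc a b, ∀ t ∈ Set.Icc a b, φ tw ≤ φ t + 1 := by
  set S := φ '' Set.Icc a b with hS
  have hne : S.Nonempty := ⟨φ a, a, ⟨le_refl _, hab⟩, rfl⟩
  have hbdd : BddBelow S := ⟨0, fun z hz => by
    obtain ⟨t, ht, hz'⟩ := hz; rw [← hz']; exact hpos t ht⟩
  obtain ⟨z, hzS, hz⟩ := exists_lt_of_csInf_lt hne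
    (show sInf S < sInf S + 1 by linarith)
  obtain ⟨tw, htwI, htwz⟩ := hzS
  refine ⟨tw, htwI, fun t htI => ?_⟩
  have h1 : sInf S ≤ φ t := csInf_le hbdd ⟨t, htI, rfl⟩
  rw [htwz]; linarith


theorem near_of_wit {g : ℝ → X} {G : ℝ}
    (hgiso : ∀ s ∈ Set.Icc (0:ℝ) G, ∀ t ∈ Set.Icc (0:ℝ) G, dist (g s) (g t) = |s - t|)
    {τ : ℝ → X} {t0 t1 D : ℝ} (e : X)
    (r : ℝ → ℝ) (hrI : ∀ s ∈ Set.Icc t0 t1, r s ∈ Set.Icc 0 G)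
    (hrd : ∀ s ∈ Set.Icc t0 t1, dist (τ s) (g (r s)) ≤ D)
    (hrφ : ∀ s ∈ Set.Icc t0 t1, |r s - dist (τ s) e| ≤ D) :
    ∀ s ∈ Set.Icc t0 t1, ∀ u ∈ Set.Icc t0 t1,
      dist (τ s) (τ u) ≤ 4*D + |dist (τ s) e - dist (τ u) e| := by
  intro s hsI u huI
  have h1 := dist_triangle4 (τ s) (g (r s)) (g (r u)) (τ u)
  have h2 : dist (g (r s)) (g (r u)) = |r s - r u| := hgiso _ (hrI s hsI) _ (hrI u huI)
  have h3 : |r s - r u| ≤ |r s - dist (τ s) e| + |dist (τ s) e - r u| := abs_sub_le _ _ _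
  have h4 : |dist (τ s) e - r u| ≤ |dist (τ s) e - dist (τ u) e| + |dist (τ u) e - r u| :=
    abs_sub_le _ _ _
  have h5 : |dist (τ u) e - r u| = |r u - dist (τ u) e| := abs_sub_comm _ _
  have h6 := hrd s hsI
  have h7 := hrd u huI
  have h8 := hrφ s hsI
  have h9 := hrφ u huI
  rw [dist_comm (g (r u)) (τ u)] at h1
  rw [h2] at h1
  rw [h5] at h4
  linarith


/-- The key "leg" lemma: a quasi-geodesic starting on a Morse geodesic `g` emanating
from `e`, which ends at (approximately) its closest point to `e`, lies near `g`;
moreover witnesses track the distance to `e`. -/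
theorem leg (hGS : GeodesicSpace X) (Nf : ℝ → ℝ → ℝ) (e : X)
    {g : ℝ → X} {G : ℝ} (hG : 0 ≤ G) (hg0 : g 0 = e)
    (hgiso : ∀ s ∈ Set.Icc (0:ℝ) G, ∀ t ∈ Set.Icc (0:ℝ) G, dist (g s) (g t) = |s - t|)
    (hmorse : IsMorseWith Nf (g '' Set.Icc 0 G))
    {lam eps a1 b1 : ℝ} (hlam : 1 ≤ lam) (heps : 0 ≤ eps) (hab : a1 ≤ b1)
    {τ : ℝ → X} (hqg : IsQuasiGeodesicOn lam eps a1 b1 τ)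
    {c0 : ℝ} (hc0 : c0 ∈ Set.Icc 0 G) (hstart : τ a1 = g c0)
    (hmin : ∀ t ∈ Set.Icc a1 b1, dist (τ b1) e ≤ dist (τ t) e + 1) :
    ∀ t ∈ Set.Icc a1 b1, ∃ r, r ∈ Set.Icc 0 G ∧
      dist (τ t) (g r) ≤ max (Nf (2*lam+1) (eps+2)) 0 + 1 ∧
      |r - dist (τ t) e| ≤ max (Nf (2*lam+1) (eps+2)) 0 + 1 := by
  have hlam0 : (0:ℝ) < lam := by linarith
  obtain ⟨k, hk0, hkend, hkiso⟩ := hGS (τ b1) e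
  set ℓ := dist (τ b1) e with hℓ
  have hℓ0 : 0 ≤ ℓ := dist_nonneg
  -- the spliced path
  set Φ : ℝ → X := fun t => if t ≤ b1 then τ t else k (t - b1) with hΦ
  have hΦτ : ∀ t ∈ Set.Icc a1 b1, Φ t = τ t := by
    intro t ht; simp only [hΦ, if_pos ht.2]
  have hke : ∀ v ∈ Set.Icc (0:ℝ) ℓ, dist (k v) e = ℓ - v := by
    intro v hv
    have := hkiso v hv ℓ ⟨hℓ0, le_refl _⟩
    rw [hkend] at this
    rw [this, abs_of_nonpos (by linarith [hv.2])]
    ring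
  have hΦqg : IsQuasiGeodesicOn (2*lam+1) (eps+2) a1 (b1+ℓ) Φ := by
    apply qg_of_le
    intro s hs t ht hst
    have h2l : (0:ℝ) < 2*lam+1 := by linarith
    have habs : |s - t| = t - s := by rw [abs_sub_comm, abs_of_nonneg (by linarith)]
    rw [habs]
    by_cases hsb : s ≤ b1
    · by_cases htb : t ≤ b1
      · -- both on τ
        have hsI : s ∈ Set.Icc a1 b1 := ⟨hs.1, hsb⟩
        have htI : t ∈ Set.Icc a1 b1 := ⟨ht.1, htb⟩
        rw [hΦτ s hsI, hΦτ t htI]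
        obtain ⟨h1, h2⟩ := hqg s hsI t htI
        have habs2 : |s - t| = t - s := habs
        rw [habs2] at h1 h2
        constructor
        · have hmono : 1/(2*lam+1) * (t-s) ≤ 1/lam * (t-s) := by
            apply mul_le_mul_of_nonneg_right _ (by linarith)
            apply one_div_le_one_div_of_le hlam0 (by linarith)
          linarith
        · nlinarith
      · -- s on τ, t on k
        push_neg at htb
        have hsI : s ∈ Set.Icc a1 b1 := ⟨hs.1, hsb⟩
        set v := t - b1 with hv
        have hvI : v ∈ Set.Icc (0:ℝ) ℓ := ⟨by linarith, by linarith [ht.2]⟩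
        have hΦs : Φ s = τ s := hΦτ s hsI
        have hΦt : Φ t = k v := by simp only [hΦ, if_neg (not_le.mpr htb)]; rfl
        rw [hΦs, hΦt]
        set d := dist (τ s) (k v) with hd
        have hd0 : 0 ≤ d := dist_nonneg
        -- lower estimate pieces
        have hkev : dist (k v) e = ℓ - v := hke v hvI
        have hτse : ℓ - 1 ≤ dist (τ s) e := by linarith [hmin s hsI]
        have htri1 : dist (τ s) e ≤ d + dist (k v) e := dist_triangle _ _ _
        have hvd : v ≤ d + 1 := by
          rw [hkev] at htri1; linarith
        have hb1I : b1 ∈ Set.Icc a1 b1 := ⟨hab, le_refl _⟩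
        have hlow := (hqg s hsI b1 hb1I).1
        have habs3 : |s - b1| = b1 - s := by rw [abs_sub_comm, abs_of_nonneg (by linarith)]
        rw [habs3] at hlow
        have htri2 : dist (τ s) (τ b1) ≤ d + v := by
          have h1 : dist (τ s) (τ b1) ≤ d + dist (k v) (τ b1) := dist_triangle _ _ _
          have h2 : dist (k v) (τ b1) = v := by
            have h := hkiso v hvI 0 ⟨le_refl _, hℓ0⟩
            rw [hk0] at h
            rw [h, sub_zero, abs_of_nonneg hvI.1]
          rw [h2] at h1; exact h1
        -- b1 - s ≤ lam * (d + v + eps)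
        have hb1s : b1 - s ≤ lam * (d + v + eps) := by
          have h1 : (1/lam) * (b1 - s) ≤ d + v + eps := by linarith
          have := mul_le_mul_of_nonneg_left h1 (le_of_lt hlam0)
          rw [← mul_assoc, mul_one_div_cancel (ne_of_gt hlam0), one_mul] at this
          linarith
        constructor
        · -- lower
          have hts : t - s ≤ (2*lam+1) * (d + (eps + 2)) := by nlinarith
          have h1 : 1/(2*lam+1) * (t - s) ≤ d + (eps + 2) := by
            have := mul_le_mul_of_nonneg_left hts (le_of_lt (one_div_pos.mpr h2l))
            rw [← mul_assoc, one_div_mul_cancel (ne_of_gt h2l), one_mul] at this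
            linarith
          linarith
        · -- upper
          have hup := (hqg s hsI b1 hb1I).2
          rw [habs3] at hup
          have : d ≤ dist (τ s) (τ b1) + v := by
            have h1 : d ≤ dist (τ s) (τ b1) + dist (τ b1) (k v) := dist_triangle _ _ _
            have h2 : dist (τ b1) (k v) = v := by
              have h := hkiso 0 ⟨le_refl _, hℓ0⟩ v hvI
              rw [hk0] at h
              rw [h, abs_sub_comm, sub_zero, abs_of_nonneg hvI.1]
            rw [h2] at h1; exact h1
          nlinarith
    · -- both on k
      push_neg at hsb
      have htb : ¬ t ≤ b1 := by push_neg; linarith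
      have hΦs : Φ s = k (s - b1) := by simp only [hΦ, if_neg (not_le.mpr hsb)]
      have hΦt : Φ t = k (t - b1) := by simp only [hΦ, if_neg htb]
      rw [hΦs, hΦt]
      have hsI : s - b1 ∈ Set.Icc (0:ℝ) ℓ := ⟨by linarith, by linarith [hs.2]⟩
      have htI : t - b1 ∈ Set.Icc (0:ℝ) ℓ := ⟨by linarith, by linarith [ht.2]⟩
      rw [hkiso _ hsI _ htI]
      have habs4 : |(s - b1) - (t - b1)| = t - s := by
        rw [show (s - b1) - (t - b1) = -(t - s) by ring, abs_neg, abs_of_nonneg (by linarith)]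
      rw [habs4]
      constructor
      · have hmono : 1/(2*lam+1) * (t-s) ≤ 1 * (t-s) := by
          apply mul_le_mul_of_nonneg_right _ (by linarith)
          rw [div_le_one h2l]; linarith
        nlinarith
      · nlinarith
  -- endpoints of Φ on the image of g
  have hΦa : Φ a1 ∈ g '' Set.Icc 0 G := by
    rw [hΦτ a1 ⟨le_refl _, hab⟩, hstart]
    exact ⟨c0, hc0, rfl⟩
  have hΦb : Φ (b1 + ℓ) ∈ g '' Set.Icc 0 G := by
    have : Φ (b1 + ℓ) = e := by
      by_cases h : b1 + ℓ ≤ b1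
      · have hℓz : ℓ = 0 := le_antisymm (by linarith) hℓ0
        have : Φ (b1 + ℓ) = τ b1 := by
          simp only [hΦ, hℓz, add_zero]
          rw [if_pos le_rfl]
        rw [this]
        have : dist (τ b1) e = 0 := by rw [← hℓ]; exact hℓz
        exact dist_eq_zero.mp this
      · simp only [hΦ, if_neg h, add_sub_cancel_left]
        exact hkend
    rw [this, ← hg0]
    exact ⟨0, ⟨le_refl _, hG⟩, rfl⟩
  -- apply Morse
  have hmorseΦ := hmorse (2*lam+1) (eps+2) (by linarith) (by linarith) a1 (b1+ℓ)
    (by linarith) Φ hΦqg hΦa hΦb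
  -- extract witnesses
  intro t htI
  have htI' : t ∈ Set.Icc a1 (b1+ℓ) := ⟨htI.1, by linarith [htI.2]⟩
  have h1 := hmorseΦ t htI'
  rw [hΦτ t htI] at h1
  set K := max (Nf (2*lam+1) (eps+2)) 0 with hK
  have h2 : Metric.infDist (τ t) (g '' Set.Icc 0 G) < K + 1 := by
    have : Nf (2*lam+1) (eps+2) ≤ K := le_max_left _ _
    linarith
  have hne : (g '' Set.Icc 0 G).Nonempty := ⟨g 0, 0, ⟨le_refl _, hG⟩, rfl⟩
  obtain ⟨z, hz, hdz⟩ := (Metric.infDist_lt_iff hne).mp h2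
  obtain ⟨r, hrI, hrz⟩ := hz
  rw [← hrz] at hdz
  refine ⟨r, hrI, le_of_lt hdz, ?_⟩
  have hge : dist (g r) e = r := by
    have h := hgiso r hrI 0 ⟨le_refl _, hG⟩
    rw [hg0] at h
    rw [h, sub_zero, abs_of_nonneg hrI.1]
  have habs2 : |dist (g r) e - dist (τ t) e| ≤ dist (g r) (τ t) := abs_dist_sub_le _ _ _
  rw [hge, dist_comm (g r) (τ t)] at habs2
  exact le_trans habs2 (le_of_lt hdz)

/-- Transfer lemma. -/
theorem transfer (e : X) {g : ℝ → X} {G : ℝ} (hG : 0 ≤ G) (hg0 : g 0 = e)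
    (hgiso : ∀ s ∈ Set.Icc (0:ℝ) G, ∀ t ∈ Set.Icc (0:ℝ) G, dist (g s) (g t) = |s - t|)
    {γ : ℝ → X} {L : ℝ}
    (hγiso : ∀ s ∈ Set.Icc (0:ℝ) L, ∀ t ∈ Set.Icc (0:ℝ) L, dist (γ s) (γ t) = |s - t|)
    {u v : ℝ} (hu : u ∈ Set.Icc 0 L) (hv : v ∈ Set.Icc 0 L)
    {M : ℝ} (hM : 0 ≤ M)
    (hslim : ∀ s ∈ Set.uIcc u v, ∃ r, r ∈ Set.Icc 0 G ∧ dist (γ s) (g r) ≤ M)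
    {z : X} {r : ℝ} (hrI : r ∈ Set.Icc 0 G) {D : ℝ} (hzr : dist z (g r) ≤ D)
    {W : ℝ} (hW : 0 ≤ W)
    (hwin1 : min (dist (γ u) e) (dist (γ v) e) - W ≤ r)
    (hwin2 : r ≤ max (dist (γ u) e) (dist (γ v) e) + W) :
    Metric.infDist z (γ '' Set.Icc 0 L) ≤ D + W + 2 * M := by
  set ψ : ℝ → ℝ := fun s => dist (γ s) e with hψ
  have huv : Set.uIcc u v ⊆ Set.Icc 0 L := Set.uIcc_subset_Icc hu hv
  have hγcont : ContinuousOn γ (Set.Icc 0 L) := by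
    have h : LipschitzOnWith 1 γ (Set.Icc 0 L) := by
      rw [lipschitzOnWith_iff_dist_le_mul]
      intro a ha b hb
      rw [hγiso a ha b hb, Real.dist_eq]
      simp
    exact h.continuousOn
  have hψcont : ContinuousOn ψ (Set.uIcc u v) :=
    Continuous.comp_continuousOn (Continuous.dist continuous_id continuous_const) (hγcont.mono huv)
  set mn := min (ψ u) (ψ v) with hmn
  set mx := max (ψ u) (ψ v) with hmx
  set ρ := max (min r mx) mn with hρ
  have hmnmx : mn ≤ mx := min_le_max
  have hρ1 : mn ≤ ρ := le_max_right _ _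
  have hρ2 : ρ ≤ mx := max_le (min_le_right _ _) hmnmx
  have hρmem : ρ ∈ Set.uIcc (ψ u) (ψ v) := by
    rcases le_total (ψ u) (ψ v) with h | h
    · rw [Set.uIcc_of_le h]
      refine ⟨?_, ?_⟩
      · rw [hmn, min_eq_left h] at hρ1; exact hρ1
      · rw [hmx, max_eq_right h] at hρ2; exact hρ2
    · rw [Set.uIcc_of_ge h]
      refine ⟨?_, ?_⟩
      · rw [hmn, min_eq_right h] at hρ1; exact hρ1
      · rw [hmx, max_eq_left h] at hρ2; exact hρ2
  have hrρ : |r - ρ| ≤ W := by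
    rw [abs_le]
    constructor
    · -- -(W) ≤ r - ρ i.e. ρ ≤ r + W
      have h1 : min r mx ≤ r := min_le_left _ _
      have h2 : mn ≤ r + W := by linarith
      have := max_le (le_trans h1 (by linarith : r ≤ r + W)) h2
      linarith
    · -- r - ρ ≤ W
      rcases le_total r mx with h | h
      · have : min r mx = r := min_eq_left h
        rw [hρ, this]
        have := le_max_left r mn
        linarith
      · have : min r mx = mx := min_eq_right h
        rw [hρ, this]
        have := le_max_left mx mn
        have h2 : r ≤ mx + W := by linarith
        linarith
  obtain ⟨s, hsuv, hψs⟩ := intermediate_value_uIcc hψcont hρmem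
  have hsI : s ∈ Set.Icc 0 L := huv hsuv
  obtain ⟨rs, hrsI, hrs⟩ := hslim s hsuv
  have hrsψ : |rs - ψ s| ≤ M := by
    have h1 : dist (g rs) e = rs := dist_param_e e hg0 hG hgiso hrsI
    have h2 : |dist (g rs) e - dist (γ s) e| ≤ dist (g rs) (γ s) := abs_dist_sub_le _ _ _
    rw [h1, dist_comm (g rs) (γ s)] at h2
    exact le_trans h2 hrs
  have hdist : dist z (γ s) ≤ D + W + 2*M := by
    have h1 : dist z (γ s) ≤ dist z (g r) + dist (g r) (g rs) + dist (g rs) (γ s) :=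
      dist_triangle4 _ _ _ _
    have h2 : dist (g r) (g rs) = |r - rs| := hgiso r hrI rs hrsI
    have h3 : |r - rs| ≤ |r - ρ| + |ρ - rs| := abs_sub_le _ _ _
    have h4 : |ρ - rs| ≤ M := by
      rw [← hψs, abs_sub_comm]
      exact hrsψ
    rw [dist_comm (g rs) (γ s)] at h1
    rw [h2] at h1
    linarith
  calc Metric.infDist z (γ '' Set.Icc 0 L) ≤ dist z (γ s) :=
        Metric.infDist_le_dist_of_mem ⟨s, hsI, rfl⟩
    _ ≤ D + W + 2*M := hdist


theorem sideBound (Nf : ℝ → ℝ → ℝ) (e : X)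
    {g : ℝ → X} {G : ℝ} (hG : 0 ≤ G) (hg0 : g 0 = e)
    (hgiso : ∀ s ∈ Set.Icc (0:ℝ) G, ∀ t ∈ Set.Icc (0:ℝ) G, dist (g s) (g t) = |s - t|)
    {γ : ℝ → X} {L : ℝ}
    (hγiso : ∀ s ∈ Set.Icc (0:ℝ) L, ∀ t ∈ Set.Icc (0:ℝ) L, dist (γ s) (γ t) = |s - t|)
    {u v : ℝ} (hu : u ∈ Set.Icc 0 L) (hv : v ∈ Set.Icc 0 L)
    (hslim : ∀ s ∈ Set.uIcc u v, ∃ r, r ∈ Set.Icc 0 G ∧ dist (γ s) (g r) ≤ cM Nf)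
    {τ : ℝ → X} {t0 t1 D B : ℝ} (hD : 0 ≤ D) (hB : 0 ≤ B)
    (hwit : ∀ s ∈ Set.Icc t0 t1, ∃ r, r ∈ Set.Icc 0 G ∧ dist (τ s) (g r) ≤ D ∧
      |r - dist (τ s) e| ≤ D)
    (hup : ∀ s ∈ Set.Icc t0 t1, dist (τ s) e ≤ max (dist (γ u) e) (dist (γ v) e) + B)
    (hlow : ∀ s ∈ Set.Icc t0 t1, min (dist (γ u) e) (dist (γ v) e) - B ≤ dist (τ s) e) :
    ∀ s ∈ Set.Icc t0 t1, Metric.infDist (τ s) (γ '' Set.Icc 0 L) ≤ (B + D) + D + 2 * cM Nf := by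
  intro s hsI
  obtain ⟨r, hrI, hrd, hrφ⟩ := hwit s hsI
  have hM0 : (0:ℝ) ≤ cM Nf := by linarith [cM_ge_one Nf]
  have habs := abs_le.mp hrφ
  have h1 := hup s hsI
  have h2 := hlow s hsI
  have hwin1 : min (dist (γ u) e) (dist (γ v) e) - (B + D) ≤ r := by linarith
  have hwin2 : r ≤ max (dist (γ u) e) (dist (γ v) e) + (B + D) := by linarith
  have := transfer e hG hg0 hgiso hγiso hu hv hM0 hslim hrI hrd
    (by linarith : (0:ℝ) ≤ B + D) hwin1 hwin2
  linarith


/-- Case P: both endpoints of `σ` lie (via `γ`) near the same Morse geodesic `g`. -/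
theorem caseP (Nf : ℝ → ℝ → ℝ) (e : X)
    {g : ℝ → X} {G : ℝ} (hG : 0 ≤ G) (hg0 : g 0 = e)
    (hgiso : ∀ s ∈ Set.Icc (0:ℝ) G, ∀ t ∈ Set.Icc (0:ℝ) G, dist (g s) (g t) = |s - t|)
    (hmorse : IsMorseWith Nf (g '' Set.Icc 0 G))
    {γ : ℝ → X} {L : ℝ}
    (hγiso : ∀ s ∈ Set.Icc (0:ℝ) L, ∀ t ∈ Set.Icc (0:ℝ) L, dist (γ s) (γ t) = |s - t|)
    {s1 s2 : ℝ} (hs1 : s1 ∈ Set.Icc 0 L) (hs2 : s2 ∈ Set.Icc 0 L)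
    (hslim : ∀ s ∈ Set.uIcc s1 s2, ∃ r, r ∈ Set.Icc 0 G ∧ dist (γ s) (g r) ≤ cM Nf)
    {lam eps a b : ℝ} (hlam : 1 ≤ lam) (heps : 0 ≤ eps) (hab : a < b)
    {σ : ℝ → X} (hσ : IsQuasiGeodesicOn lam eps a b σ)
    (hpa : σ a = γ s1) (hpb : σ b = γ s2) :
    ∀ t ∈ Set.Icc a b, Metric.infDist (σ t) (γ '' Set.Icc 0 L) ≤ cN' Nf lam eps := by
  have hM0 : (0:ℝ) ≤ cM Nf := by linarith [cM_ge_one Nf]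
  have hεh0 : 0 ≤ cEps Nf eps := cEps_nonneg Nf heps
  obtain ⟨rp, hrpI, hrp⟩ := hslim s1 Set.left_mem_uIcc
  obtain ⟨rq, hrqI, hrq⟩ := hslim s2 Set.right_mem_uIcc
  set σb := pert σ a b (g rp) (g rq) with hσb
  have hu : dist (g rp) (σ a) ≤ cM Nf := by rw [hpa, dist_comm]; exact hrp
  have hv : dist (g rq) (σ b) ≤ cM Nf := by rw [hpb, dist_comm]; exact hrq
  have hσbqg : IsQuasiGeodesicOn lam (cEps Nf eps) a b σb := by
    have := pert_qg hM0 hσ hu hv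
    simpa only [cEps] using this
  have hσba : σb a = g rp := pert_left _ _ _ _ _
  have hσbb : σb b = g rq := pert_right _ (ne_of_lt hab) _ _
  -- Morse + witnesses
  have hmor := hmorse lam (cEps Nf eps) hlam hεh0 a b (le_of_lt hab) σb hσbqg
    (hσba ▸ ⟨rp, hrpI, rfl⟩) (hσbb ▸ ⟨rq, hrqI, rfl⟩)
  have hwit : ∀ u ∈ Set.Icc a b, ∃ r, r ∈ Set.Icc 0 G ∧
      dist (σb u) (g r) ≤ cDp Nf lam eps ∧
      |r - dist (σb u) e| ≤ cDp Nf lam eps := by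
    intro u huI
    obtain ⟨r, h1, h2, h3⟩ := extract_witness e hG hg0 hgiso (hmor u huI)
    exact ⟨r, h1, by simpa only [cDp, N0] using h2, by simpa only [cDp, N0] using h3⟩
  choose! rr hrrI hrrd hrrφ using hwit
  set φ : ℝ → ℝ := fun u => dist (σb u) e with hφ
  have hDp0 : (0:ℝ) ≤ cDp Nf lam eps := by linarith [cDp_ge_one Nf (lam := lam) (eps := eps)]
  have hφlip : ∀ s ∈ Set.Icc a b, ∀ u ∈ Set.Icc a b, |φ s - φ u| ≤ dist (σb s) (σb u) :=
    fun s _ u _ => abs_dist_sub_le _ _ _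
  have hnear : ∀ s ∈ Set.Icc a b, ∀ u ∈ Set.Icc a b,
      dist (σb s) (σb u) ≤ 4 * cDp Nf lam eps + |φ s - φ u| := by
    intro s hsI u huI
    have h1 := dist_triangle4 (σb s) (g (rr s)) (g (rr u)) (σb u)
    have h2 : dist (g (rr s)) (g (rr u)) = |rr s - rr u| :=
      hgiso _ (hrrI s hsI) _ (hrrI u huI)
    have h3 : |rr s - rr u| ≤ |rr s - φ s| + |φ s - rr u| := abs_sub_le _ _ _
    have h4 : |φ s - rr u| ≤ |φ s - φ u| + |φ u - rr u| := abs_sub_le _ _ _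
    have h5 : |φ u - rr u| = |rr u - φ u| := abs_sub_comm _ _
    have h6 := hrrd s hsI
    have h7 := hrrd u huI
    have h8 := hrrφ s hsI
    have h9 := hrrφ u huI
    rw [dist_comm (g (rr u)) (σb u)] at h1
    rw [h2] at h1
    rw [h5] at h4
    linarith
  have hup := pinch_upper hlam hεh0 hDp0 (le_of_lt hab) hσbqg hφlip hnear
  have hlo := pinch_lower hlam hεh0 hDp0 (le_of_lt hab) hσbqg hφlip hnear
  -- endpoint values of φ
  have hφa : φ a = rp := by
    simp only [hφ]; rw [hσba]; exact dist_param_e e hg0 hG hgiso hrpI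
  have hφb : φ b = rq := by
    simp only [hφ]; rw [hσbb]; exact dist_param_e e hg0 hG hgiso hrqI
  -- relation to ψ-values
  have hrpψ : |rp - dist (γ s1) e| ≤ cM Nf := by
    have h1 : dist (g rp) e = rp := dist_param_e e hg0 hG hgiso hrpI
    have h2 : |dist (g rp) e - dist (γ s1) e| ≤ dist (g rp) (γ s1) := abs_dist_sub_le _ _ _
    rw [h1, dist_comm (g rp) (γ s1)] at h2
    exact le_trans h2 hrp
  have hrqψ : |rq - dist (γ s2) e| ≤ cM Nf := by
    have h1 : dist (g rq) e = rq := dist_param_e e hg0 hG hgiso hrqI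
    have h2 : |dist (g rq) e - dist (γ s2) e| ≤ dist (g rq) (γ s2) := abs_dist_sub_le _ _ _
    rw [h1, dist_comm (g rq) (γ s2)] at h2
    exact le_trans h2 hrq
  intro t htI
  -- window bounds for rr t
  set Λ := cLam Nf lam eps with hΛdef
  have hΛmono : 2*(cEps Nf eps) + lam*lam*(4*(cDp Nf lam eps) + 3*(cEps Nf eps)) ≤ Λ := by
    simp only [hΛdef, cLam]
    have h1 := cDp_le_cD Nf (lam := lam) (eps := eps)
    nlinarith
  have hwin2 : rr t ≤ max (dist (γ s1) e) (dist (γ s2) e) +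
      (cM Nf + 1 + cEps Nf eps + Λ + cD Nf lam eps) := by
    have h1 := hup t htI
    have h2 := hrrφ t htI
    have h3 : rr t ≤ φ t + cDp Nf lam eps := by
      have := (abs_le.mp h2).2; linarith
    have h4 : max (φ a) (φ b) ≤ max (dist (γ s1) e) (dist (γ s2) e) + cM Nf := by
      rw [hφa, hφb]
      apply max_le
      · have := (abs_le.mp hrpψ).2
        calc rp ≤ dist (γ s1) e + cM Nf := by linarith
          _ ≤ max (dist (γ s1) e) (dist (γ s2) e) + cM Nf := by
              have := le_max_left (dist (γ s1) e) (dist (γ s2) e); linarith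
      · have := (abs_le.mp hrqψ).2
        calc rq ≤ dist (γ s2) e + cM Nf := by linarith
          _ ≤ max (dist (γ s1) e) (dist (γ s2) e) + cM Nf := by
              have := le_max_right (dist (γ s1) e) (dist (γ s2) e); linarith
    have h5 := cDp_le_cD Nf (lam := lam) (eps := eps)
    have h6 := cEps_nonneg Nf heps
    linarith
  have hwin1 : min (dist (γ s1) e) (dist (γ s2) e) -
      (cM Nf + 1 + cEps Nf eps + Λ + cD Nf lam eps) ≤ rr t := by
    have h1 := hlo t htI
    have h2 := hrrφ t htI
    have h3 : φ t - cDp Nf lam eps ≤ rr t := by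
      have := (abs_le.mp h2).1; linarith
    have h4 : min (dist (γ s1) e) (dist (γ s2) e) - cM Nf ≤ min (φ a) (φ b) := by
      rw [hφa, hφb]
      apply le_min
      · have := (abs_le.mp hrpψ).1
        have h5 := min_le_left (dist (γ s1) e) (dist (γ s2) e)
        linarith
      · have := (abs_le.mp hrqψ).1
        have h5 := min_le_right (dist (γ s1) e) (dist (γ s2) e)
        linarith
    have h5 := cDp_le_cD Nf (lam := lam) (eps := eps)
    have h6 := cEps_nonneg Nf heps
    linarith
  have hW0 : 0 ≤ cM Nf + 1 + cEps Nf eps + Λ + cD Nf lam eps := by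
    have h1 := cLam_nonneg Nf hlam heps
    have h2 := cD_ge_one Nf (lam := lam) (eps := eps)
    simp only [hΛdef]
    linarith
  have htrans := transfer e hG hg0 hgiso hγiso hs1 hs2 hM0 hslim (hrrI t htI)
    (hrrd t htI) hW0 hwin1 hwin2
  -- convert from σb to σ
  have hconv : Metric.infDist (σ t) (γ '' Set.Icc 0 L) ≤
      Metric.infDist (σb t) (γ '' Set.Icc 0 L) + cM Nf := by
    have h1 : dist (σ t) (σb t) ≤ cM Nf := by
      rw [dist_comm]; exact pert_dist hM0 hu hv t
    have := Metric.infDist_le_infDist_add_dist (x := σ t) (y := σb t)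
      (s := γ '' Set.Icc 0 L)
    linarith
  -- final arithmetic
  have hfin : cDp Nf lam eps + (cM Nf + 1 + cEps Nf eps + Λ + cD Nf lam eps) +
      2 * cM Nf + cM Nf ≤ cN' Nf lam eps := by
    simp only [cN', hΛdef]
    have h1 := cDp_le_cD Nf (lam := lam) (eps := eps)
    have h2 := cM_ge_one Nf
    have h3 := cQ2_nonneg Nf hlam heps
    linarith
  linarith


set_option maxHeartbeats 1000000 in
/-- Case M: the endpoints of `σ` lie on opposite sides of the corner `γ sw`. -/
theorem caseM (hGS : GeodesicSpace X) (Nf : ℝ → ℝ → ℝ) (e : X)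
    {g1 : ℝ → X} {G1 : ℝ} (hG1 : 0 ≤ G1) (hg10 : g1 0 = e)
    (hg1iso : ∀ s ∈ Set.Icc (0:ℝ) G1, ∀ t ∈ Set.Icc (0:ℝ) G1, dist (g1 s) (g1 t) = |s - t|)
    (hmorse1 : IsMorseWith Nf (g1 '' Set.Icc 0 G1))
    {g2 : ℝ → X} {G2 : ℝ} (hG2 : 0 ≤ G2) (hg20 : g2 0 = e)
    (hg2iso : ∀ s ∈ Set.Icc (0:ℝ) G2, ∀ t ∈ Set.Icc (0:ℝ) G2, dist (g2 s) (g2 t) = |s - t|)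
    (hmorse2 : IsMorseWith Nf (g2 '' Set.Icc 0 G2))
    {γ : ℝ → X} {L : ℝ}
    (hγiso : ∀ s ∈ Set.Icc (0:ℝ) L, ∀ t ∈ Set.Icc (0:ℝ) L, dist (γ s) (γ t) = |s - t|)
    {s1 sw s2 : ℝ} (hs1 : s1 ∈ Set.Icc 0 L) (hsw : sw ∈ Set.Icc 0 L) (hs2 : s2 ∈ Set.Icc 0 L)
    (h1w : s1 ≤ sw) (hw2 : sw ≤ s2)
    (hslim1 : ∀ s ∈ Set.uIcc s1 sw, ∃ r, r ∈ Set.Icc 0 G1 ∧ dist (γ s) (g1 r) ≤ cM Nf)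
    (hslim2 : ∀ s ∈ Set.uIcc sw s2, ∃ r, r ∈ Set.Icc 0 G2 ∧ dist (γ s) (g2 r) ≤ cM Nf)
    (hψmin : ∀ s ∈ Set.Icc s1 s2, dist (γ sw) e ≤ dist (γ s) e)
    {lam eps a b : ℝ} (hlam : 1 ≤ lam) (heps : 0 ≤ eps) (hab : a < b)
    {σ : ℝ → X} (hσ : IsQuasiGeodesicOn lam eps a b σ)
    (hpa : σ a = γ s1) (hpb : σ b = γ s2) :
    ∀ t ∈ Set.Icc a b, Metric.infDist (σ t) (γ '' Set.Icc 0 L) ≤ cN' Nf lam eps := by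
  have hM1 : (1:ℝ) ≤ cM Nf := cM_ge_one Nf
  have hM0 : (0:ℝ) ≤ cM Nf := by linarith only [hM1]
  have hεh0 : 0 ≤ cEps Nf eps := cEps_nonneg Nf heps
  have hD11 : (1:ℝ) ≤ cD1 Nf lam eps := cD1_ge_one Nf
  have hD10 : (0:ℝ) ≤ cD1 Nf lam eps := by linarith only [hD11]
  have hΛ0 : 0 ≤ cLam Nf lam eps := cLam_nonneg Nf hlam heps
  have hlam0 : (0:ℝ) < lam := by linarith only [hlam]
  -- endpoint and corner witnesses
  obtain ⟨rp, hrpI, hrp⟩ := hslim1 s1 Set.left_mem_uIcc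
  obtain ⟨cw, hcwI, hcw⟩ := hslim1 sw Set.right_mem_uIcc
  obtain ⟨rq, hrqI, hrq⟩ := hslim2 s2 Set.right_mem_uIcc
  obtain ⟨dw, hdwI, hdw⟩ := hslim2 sw Set.left_mem_uIcc
  -- the perturbed quasi-geodesic
  set σb := pert σ a b (g1 rp) (g2 rq) with hσbdef
  have hu : dist (g1 rp) (σ a) ≤ cM Nf := by rw [hpa, dist_comm]; exact hrp
  have hv : dist (g2 rq) (σ b) ≤ cM Nf := by rw [hpb, dist_comm]; exact hrq
  have hσbqg : IsQuasiGeodesicOn lam (cEps Nf eps) a b σb := by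
    have := pert_qg hM0 hσ hu hv
    simpa only [cEps] using this
  have hσba : σb a = g1 rp := pert_left _ _ _ _ _
  have hσbb : σb b = g2 rq := pert_right _ (ne_of_lt hab) _ _
  set φ : ℝ → ℝ := fun u => dist (σb u) e with hφdef
  have hφpos : ∀ u ∈ Set.Icc a b, 0 ≤ φ u := fun u _ => dist_nonneg
  have HcAB : ∀ s ∈ Set.Icc a b, ∀ u ∈ Set.Icc a b,
      |φ s - φ u| ≤ lam * |s - u| + cEps Nf eps := by
    intro s hs u hu'
    exact le_trans (abs_dist_sub_le _ _ _) (hσbqg s hs u hu').2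
  obtain ⟨tw, htwI, htwmin⟩ := exists_approx_min φ (le_of_lt hab) hφpos
  have hsub1 : Set.Icc a tw ⊆ Set.Icc a b := Set.Icc_subset_Icc le_rfl htwI.2
  have hsub2 : Set.Icc tw b ⊆ Set.Icc a b := Set.Icc_subset_Icc htwI.1 le_rfl
  have hleg1 := leg hGS Nf e hG1 hg10 hg1iso hmorse1 hlam hεh0 htwI.1
    (qg_restrict hsub1 hσbqg) hrpI hσba
    (fun t htI => htwmin t (hsub1 htI))
  have hwit1 : ∀ u ∈ Set.Icc a tw, ∃ r, r ∈ Set.Icc 0 G1 ∧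
      dist (σb u) (g1 r) ≤ cD1 Nf lam eps ∧ |r - φ u| ≤ cD1 Nf lam eps := by
    intro u huI
    obtain ⟨r, h1, h2, h3⟩ := hleg1 u huI
    exact ⟨r, h1, by simpa only [cD1, N0] using h2, by simpa only [cD1, N0] using h3⟩
  have hrev : IsQuasiGeodesicOn lam (cEps Nf eps) tw b (fun u => σb (tw + b - u)) :=
    qg_reverse (qg_restrict hsub2 hσbqg)
  have hstart2 : (fun u => σb (tw + b - u)) tw = g2 rq := by
    simp only []
    rw [show tw + b - tw = b by ring, hσbb]
  have hmin2 : ∀ u ∈ Set.Icc tw b,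
      dist ((fun u => σb (tw + b - u)) b) e ≤ dist ((fun u => σb (tw + b - u)) u) e + 1 := by
    intro u huI
    simp only []
    rw [show tw + b - b = tw by ring]
    exact htwmin _ ⟨by linarith only [huI.2, htwI.1], by linarith only [huI.1, htwI.2]⟩
  have hleg2 := leg hGS Nf e hG2 hg20 hg2iso hmorse2 hlam hεh0 htwI.2 hrev hrqI hstart2 hmin2
  have hwit2 : ∀ u ∈ Set.Icc tw b, ∃ r, r ∈ Set.Icc 0 G2 ∧
      dist (σb u) (g2 r) ≤ cD1 Nf lam eps ∧ |r - φ u| ≤ cD1 Nf lam eps := by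
    intro u huI
    have h := hleg2 (tw + b - u) ⟨by linarith only [huI.2], by linarith only [huI.1]⟩
    rw [show tw + b - (tw + b - u) = u by ring] at h
    obtain ⟨r, h1, h2, h3⟩ := h
    exact ⟨r, h1, by simpa only [cD1, N0] using h2, by simpa only [cD1, N0] using h3⟩
  choose! r1 hr1I hr1d hr1φ using hwit1
  choose! r2 hr2I hr2d hr2φ using hwit2
  have hwitA : ∀ u ∈ Set.Icc a tw, ∃ r, r ∈ Set.Icc 0 G1 ∧
      dist (σb u) (g1 r) ≤ cD1 Nf lam eps ∧ |r - φ u| ≤ cD1 Nf lam eps :=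
    fun u hu => ⟨r1 u, hr1I u hu, hr1d u hu, hr1φ u hu⟩
  have hwitB : ∀ u ∈ Set.Icc tw b, ∃ r, r ∈ Set.Icc 0 G2 ∧
      dist (σb u) (g2 r) ≤ cD1 Nf lam eps ∧ |r - φ u| ≤ cD1 Nf lam eps :=
    fun u hu => ⟨r2 u, hr2I u hu, hr2d u hu, hr2φ u hu⟩
  have hφa : φ a = rp := by
    simp only [hφdef]; rw [hσba]; exact dist_param_e e hg10 hG1 hg1iso hrpI
  have hφb : φ b = rq := by
    simp only [hφdef]; rw [hσbb]; exact dist_param_e e hg20 hG2 hg2iso hrqI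
  set ψ1 := dist (γ s1) e with hψ1def
  set ψw := dist (γ sw) e with hψwdef
  set ψ2 := dist (γ s2) e with hψ2def
  have hψw1 : ψw ≤ ψ1 := hψmin s1 ⟨le_refl _, by linarith only [h1w, hw2]⟩
  have hψw2 : ψw ≤ ψ2 := hψmin s2 ⟨by linarith only [h1w, hw2], le_refl _⟩
  have hrpψ : |rp - ψ1| ≤ cM Nf := by
    have h1 : dist (g1 rp) e = rp := dist_param_e e hg10 hG1 hg1iso hrpI
    have h2 : |dist (g1 rp) e - dist (γ s1) e| ≤ dist (g1 rp) (γ s1) := abs_dist_sub_le _ _ _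
    rw [h1, dist_comm (g1 rp) (γ s1)] at h2
    exact le_trans h2 hrp
  have hrqψ : |rq - ψ2| ≤ cM Nf := by
    have h1 : dist (g2 rq) e = rq := dist_param_e e hg20 hG2 hg2iso hrqI
    have h2 : |dist (g2 rq) e - dist (γ s2) e| ≤ dist (g2 rq) (γ s2) := abs_dist_sub_le _ _ _
    rw [h1, dist_comm (g2 rq) (γ s2)] at h2
    exact le_trans h2 hrq
  have hcwψ : |cw - ψw| ≤ cM Nf := by
    have h1 : dist (g1 cw) e = cw := dist_param_e e hg10 hG1 hg1iso hcwI
    have h2 : |dist (g1 cw) e - dist (γ sw) e| ≤ dist (g1 cw) (γ sw) := abs_dist_sub_le _ _ _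
    rw [h1, dist_comm (g1 cw) (γ sw)] at h2
    exact le_trans h2 hcw
  have hdwψ : |dw - ψw| ≤ cM Nf := by
    have h1 : dist (g2 dw) e = dw := dist_param_e e hg20 hG2 hg2iso hdwI
    have h2 : |dist (g2 dw) e - dist (γ sw) e| ≤ dist (g2 dw) (γ sw) := abs_dist_sub_le _ _ _
    rw [h1, dist_comm (g2 dw) (γ sw)] at h2
    exact le_trans h2 hdw
  have hnear1 := near_of_wit hg1iso e r1 hr1I hr1d hr1φ
  have hnear2 := near_of_wit hg2iso e r2 hr2I hr2d hr2φ
  have hφlip1 : ∀ s ∈ Set.Icc a tw, ∀ u ∈ Set.Icc a tw, |φ s - φ u| ≤ dist (σb s) (σb u) :=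
    fun s _ u _ => abs_dist_sub_le _ _ _
  have hφlip2 : ∀ s ∈ Set.Icc tw b, ∀ u ∈ Set.Icc tw b, |φ s - φ u| ≤ dist (σb s) (σb u) :=
    fun s _ u _ => abs_dist_sub_le _ _ _
  have hpinup1 := pinch_upper hlam hεh0 hD10 htwI.1 (qg_restrict hsub1 hσbqg) hφlip1 hnear1
  have hpinup2 := pinch_upper hlam hεh0 hD10 htwI.2 (qg_restrict hsub2 hσbqg) hφlip2 hnear2
  set B := cM Nf + 1 + cEps Nf eps + cLam Nf lam eps with hBdef
  have hB0 : 0 ≤ B := by simp only [hBdef]; linarith only [hM0, hεh0, hΛ0]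
  have hΛ1Λ : 2*(cEps Nf eps) + lam*lam*(4*(cD1 Nf lam eps) + 3*(cEps Nf eps)) ≤
      cLam Nf lam eps := by
    simp only [cLam]
    have h1 := cD1_le_cD Nf (lam := lam) (eps := eps)
    have hsq : (0:ℝ) ≤ lam*lam := mul_nonneg (by linarith only [hlam]) (by linarith only [hlam])
    have h2 := mul_le_mul_of_nonneg_left
      (show 4*(cD1 Nf lam eps) + 3*(cEps Nf eps) ≤ 4*(cD Nf lam eps) + 3*(cEps Nf eps) by
        linarith only [h1]) hsq
    linarith only [h2]
  have hupA : ∀ s ∈ Set.Icc a tw, φ s ≤ max ψ1 ψw + B := by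
    intro s hsI
    have h1 := hpinup1 s hsI
    have h2 : φ tw ≤ φ a + 1 := htwmin a ⟨le_refl _, le_of_lt hab⟩
    have h3 : max (φ a) (φ tw) ≤ rp + 1 := by
      apply max_le
      · rw [hφa]; linarith only []
      · rw [hφa] at h2; linarith only [h2]
    have h4 : rp ≤ ψ1 + cM Nf := by linarith only [(abs_le.mp hrpψ).2]
    have h5 : ψ1 ≤ max ψ1 ψw := le_max_left _ _
    simp only [hBdef]
    linarith only [h1, h3, h4, h5, hΛ1Λ, hεh0]
  have hupB : ∀ s ∈ Set.Icc tw b, φ s ≤ max ψw ψ2 + B := by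
    intro s hsI
    have h1 := hpinup2 s hsI
    have h2 : φ tw ≤ φ b + 1 := htwmin b ⟨le_of_lt hab, le_refl _⟩
    have h3 : max (φ tw) (φ b) ≤ rq + 1 := by
      apply max_le
      · rw [hφb] at h2; linarith only [h2]
      · rw [hφb]; linarith only []
    have h4 : rq ≤ ψ2 + cM Nf := by linarith only [(abs_le.mp hrqψ).2]
    have h5 : ψ2 ≤ max ψw ψ2 := le_max_right _ _
    simp only [hBdef]
    linarith only [h1, h3, h4, h5, hΛ1Λ, hεh0]
  have hconv : ∀ t ∈ Set.Icc a b, Metric.infDist (σ t) (γ '' Set.Icc 0 L) ≤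
      Metric.infDist (σb t) (γ '' Set.Icc 0 L) + cM Nf := by
    intro t htI
    have h1 : dist (σ t) (σb t) ≤ cM Nf := by
      rw [dist_comm]; exact pert_dist hM0 hu hv t
    have h2 := Metric.infDist_le_infDist_add_dist (x := σ t) (y := σb t)
      (s := γ '' Set.Icc 0 L)
    linarith only [h1, h2]
  have hfinal : (B + cD1 Nf lam eps) + cD1 Nf lam eps + 2 * cM Nf + cM Nf ≤
      cN' Nf lam eps := by
    simp only [cN', hBdef]
    have h1 := cD1_le_cD Nf (lam := lam) (eps := eps)
    have h2 := cQ2_nonneg Nf hlam heps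
    linarith only [h1, h2, hM0]
  rcases le_or_gt ψw (φ tw) with hcase | hcase
  · -- CASE A : no deep dive
    have hlowA : ∀ s ∈ Set.Icc a tw, min ψ1 ψw - B ≤ φ s := by
      intro s hsI
      have h1 : φ tw ≤ φ s + 1 := htwmin s (hsub1 hsI)
      have h2 : min ψ1 ψw ≤ ψw := min_le_right _ _
      simp only [hBdef]
      linarith only [h1, h2, hcase, hM0, hεh0, hΛ0]
    have hlowB : ∀ s ∈ Set.Icc tw b, min ψw ψ2 - B ≤ φ s := by
      intro s hsI
      have h1 : φ tw ≤ φ s + 1 := htwmin s (hsub2 hsI)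
      have h2 : min ψw ψ2 ≤ ψw := min_le_left _ _
      simp only [hBdef]
      linarith only [h1, h2, hcase, hM0, hεh0, hΛ0]
    have hside1 := sideBound Nf e hG1 hg10 hg1iso hγiso hs1 hsw
      (by rw [Set.uIcc_of_le h1w] at hslim1 ⊢; exact hslim1) hD10 hB0 hwitA hupA hlowA
    have hside2 := sideBound Nf e hG2 hg20 hg2iso hγiso hsw hs2
      (by rw [Set.uIcc_of_le hw2] at hslim2 ⊢; exact hslim2) hD10 hB0 hwitB hupB hlowB
    intro t htI
    rcases le_total t tw with h | h
    · have hb1 := hside1 t ⟨htI.1, h⟩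
      have hb2 := hconv t htI
      linarith only [hb1, hb2, hfinal]
    · have hb1 := hside2 t ⟨h, htI.2⟩
      have hb2 := hconv t htI
      linarith only [hb1, hb2, hfinal]
  · -- CASE B : deep dive below the corner level
    set Vp := min rp ψw with hVpdef
    set Vq := min rq ψw with hVqdef
    have hVp1 : Vp ≤ ψw := min_le_right _ _
    have hVp2 : ψw - cM Nf ≤ Vp := by
      apply le_min
      · linarith only [(abs_le.mp hrpψ).1, hψw1]
      · linarith only [hM0]
    have hVq1 : Vq ≤ ψw := min_le_right _ _
    have hVq2 : ψw - cM Nf ≤ Vq := by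
      apply le_min
      · linarith only [(abs_le.mp hrqψ).1, hψw2]
      · linarith only [hM0]
    have ht1ex : ∃ t1 ∈ Set.Icc a tw, (Vp - cEps Nf eps ≤ φ t1 ∧ φ t1 ≤ Vp + cEps Nf eps) ∧
        ∀ u' ∈ Set.Icc a tw, u' < t1 → Vp < φ u' := by
      rcases le_total (φ tw) Vp with hc | hc
      · obtain ⟨t1, hI, hA, hB', hC⟩ := crossing_inf φ lam (cEps Nf eps) a tw Vp hlam0 hεh0
          htwI.1 (fun s hs u hu' => HcAB s (hsub1 hs) u (hsub1 hu')) hc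
        refine ⟨t1, hI, ⟨?_, hA⟩, hC⟩
        rcases hB' with h | h
        · exact h
        · rw [h, hφa]
          have h6 : Vp ≤ rp := min_le_left _ _
          linarith only [h6, hεh0]
      · have hVpr : Vp = rp := by
          have h1 : Vp < ψw := lt_of_le_of_lt hc hcase
          have h2 : rp < ψw := by
            by_contra h
            push_neg at h
            rw [hVpdef, min_eq_right h] at h1
            exact lt_irrefl _ h1
          rw [hVpdef, min_eq_left (le_of_lt h2)]
        refine ⟨a, ⟨le_refl _, htwI.1⟩, ⟨?_, ?_⟩, ?_⟩
        · rw [hφa, hVpr]; linarith only [hεh0]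
        · rw [hφa, hVpr]; linarith only [hεh0]
        · intro u' hu' hlt
          exact absurd hlt (not_lt.mpr hu'.1)
    have ht2ex : ∃ t2 ∈ Set.Icc tw b, (Vq - cEps Nf eps ≤ φ t2 ∧ φ t2 ≤ Vq + cEps Nf eps) ∧
        ∀ u' ∈ Set.Icc tw b, t2 < u' → Vq < φ u' := by
      rcases le_total (φ tw) Vq with hc | hc
      · obtain ⟨t2, hI, hA, hB', hC⟩ := crossing_sup φ lam (cEps Nf eps) tw b Vq hlam0 hεh0
          htwI.2 (fun s hs u hu' => HcAB s (hsub2 hs) u (hsub2 hu')) hc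
        refine ⟨t2, hI, ⟨?_, hA⟩, hC⟩
        rcases hB' with h | h
        · exact h
        · rw [h, hφb]
          have h6 : Vq ≤ rq := min_le_left _ _
          linarith only [h6, hεh0]
      · have hVqr : Vq = rq := by
          have h1 : Vq < ψw := lt_of_le_of_lt hc hcase
          have h2 : rq < ψw := by
            by_contra h
            push_neg at h
            rw [hVqdef, min_eq_right h] at h1
            exact lt_irrefl _ h1
          rw [hVqdef, min_eq_left (le_of_lt h2)]
        refine ⟨b, ⟨htwI.2, le_refl _⟩, ⟨?_, ?_⟩, ?_⟩
        · rw [hφb, hVqr]; linarith only [hεh0]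
        · rw [hφb, hVqr]; linarith only [hεh0]
        · intro u' hu' hlt
          exact absurd hlt (not_lt.mpr hu'.2)
    obtain ⟨t1, ht1I, ⟨ht1lo, ht1up⟩, ht1side⟩ := ht1ex
    obtain ⟨t2, ht2I, ⟨ht2lo, ht2up⟩, ht2side⟩ := ht2ex
    have hd1 : dist (σb t1) (γ sw) ≤ cQ1 Nf lam eps := by
      have h1 := hr1d t1 ht1I
      have h2 := hr1φ t1 ht1I
      have h3 : |φ t1 - ψw| ≤ cM Nf + cEps Nf eps := by
        rw [abs_le]
        constructor
        · linarith only [ht1lo, hVp2]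
        · linarith only [ht1up, hVp1, hM0]
      have h4 : |r1 t1 - cw| ≤ cD1 Nf lam eps + (cM Nf + cEps Nf eps) + cM Nf := by
        have i1 : |r1 t1 - cw| ≤ |r1 t1 - φ t1| + |φ t1 - cw| := abs_sub_le _ _ _
        have i2 : |φ t1 - cw| ≤ |φ t1 - ψw| + |ψw - cw| := abs_sub_le _ _ _
        have i3 : |ψw - cw| = |cw - ψw| := abs_sub_comm _ _
        rw [i3] at i2
        linarith only [i1, i2, h2, h3, hcwψ]
      have h5 : dist (g1 (r1 t1)) (g1 cw) = |r1 t1 - cw| :=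
        hg1iso _ (hr1I t1 ht1I) _ hcwI
      have h6 := dist_triangle4 (σb t1) (g1 (r1 t1)) (g1 cw) (γ sw)
      rw [h5, dist_comm (g1 cw) (γ sw)] at h6
      simp only [cQ1]
      linarith only [h1, h4, h6, hcw]
    have hd2 : dist (σb t2) (γ sw) ≤ cQ1 Nf lam eps := by
      have h1 := hr2d t2 ht2I
      have h2 := hr2φ t2 ht2I
      have h3 : |φ t2 - ψw| ≤ cM Nf + cEps Nf eps := by
        rw [abs_le]
        constructor
        · linarith only [ht2lo, hVq2]
        · linarith only [ht2up, hVq1, hM0]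
      have h4 : |r2 t2 - dw| ≤ cD1 Nf lam eps + (cM Nf + cEps Nf eps) + cM Nf := by
        have i1 : |r2 t2 - dw| ≤ |r2 t2 - φ t2| + |φ t2 - dw| := abs_sub_le _ _ _
        have i2 : |φ t2 - dw| ≤ |φ t2 - ψw| + |ψw - dw| := abs_sub_le _ _ _
        have i3 : |ψw - dw| = |dw - ψw| := abs_sub_comm _ _
        rw [i3] at i2
        linarith only [i1, i2, h2, h3, hdwψ]
      have h5 : dist (g2 (r2 t2)) (g2 dw) = |r2 t2 - dw| :=
        hg2iso _ (hr2I t2 ht2I) _ hdwI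
      have h6 := dist_triangle4 (σb t2) (g2 (r2 t2)) (g2 dw) (γ sw)
      rw [h5, dist_comm (g2 dw) (γ sw)] at h6
      simp only [cQ1]
      linarith only [h1, h4, h6, hdw]
    have ht12 : t1 ≤ t2 := le_trans ht1I.2 ht2I.1
    have hmidlen : t2 - t1 ≤ lam * (2 * cQ1 Nf lam eps + cEps Nf eps) := by
      have h0 := dist_triangle (σb t1) (γ sw) (σb t2)
      rw [dist_comm (γ sw) (σb t2)] at h0
      have h1 : dist (σb t1) (σb t2) ≤ 2 * cQ1 Nf lam eps := by
        linarith only [h0, hd1, hd2]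
      have h2 := (hσbqg t1 (hsub1 ht1I) t2 (hsub2 ht2I)).1
      have h3 : |t1 - t2| = t2 - t1 := by
        rw [abs_sub_comm, abs_of_nonneg (by linarith only [ht12])]
      rw [h3] at h2
      have h4 : (1/lam) * (t2 - t1) ≤ 2 * cQ1 Nf lam eps + cEps Nf eps := by
        linarith only [h1, h2]
      have h5 := mul_le_mul_of_nonneg_left h4 (le_of_lt hlam0)
      rw [← mul_assoc, mul_one_div_cancel (ne_of_gt hlam0), one_mul] at h5
      exact h5
    have hmid : ∀ t ∈ Set.Icc t1 t2, dist (σb t) (γ sw) ≤ cQ2 Nf lam eps := by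
      intro t htI'
      have h1 := (hσbqg t1 (hsub1 ht1I) t
        ⟨le_trans ht1I.1 htI'.1, le_trans htI'.2 ht2I.2⟩).2
      have h2 : |t1 - t| = t - t1 := by
        rw [abs_sub_comm, abs_of_nonneg (by linarith only [htI'.1])]
      rw [h2] at h1
      have h3 : t - t1 ≤ lam * (2 * cQ1 Nf lam eps + cEps Nf eps) := by
        linarith only [htI'.2, hmidlen]
      have h4 : lam * (t - t1) ≤ lam * (lam * (2 * cQ1 Nf lam eps + cEps Nf eps)) :=
        mul_le_mul_of_nonneg_left h3 (le_of_lt hlam0)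
      have h5 := dist_triangle (σb t) (σb t1) (γ sw)
      rw [dist_comm (σb t) (σb t1)] at h5
      have h7 : lam * (lam * (2 * cQ1 Nf lam eps + cEps Nf eps)) =
          lam*lam*(2 * cQ1 Nf lam eps + cEps Nf eps) := by ring
      simp only [cQ2]
      linarith only [h1, h4, h5, hd1, h7]
    have hlow1 : ∀ u ∈ Set.Icc a t1, min ψ1 ψw - B ≤ φ u := by
      intro u huI
      have hmm : min ψ1 ψw ≤ ψw := min_le_right _ _
      rcases eq_or_lt_of_le huI.2 with h | h
      · rw [h]
        simp only [hBdef]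
        linarith only [ht1lo, hVp2, hmm, hΛ0]
      · have h6 := ht1side u ⟨huI.1, le_trans huI.2 ht1I.2⟩ h
        simp only [hBdef]
        linarith only [h6, hVp2, hmm, hΛ0, hεh0]
    have hup1 : ∀ u ∈ Set.Icc a t1, φ u ≤ max ψ1 ψw + B := by
      intro u huI
      exact hupA u ⟨huI.1, le_trans huI.2 ht1I.2⟩
    have hwit1' : ∀ u ∈ Set.Icc a t1, ∃ r, r ∈ Set.Icc 0 G1 ∧
        dist (σb u) (g1 r) ≤ cD1 Nf lam eps ∧ |r - φ u| ≤ cD1 Nf lam eps :=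
      fun u huI => hwitA u ⟨huI.1, le_trans huI.2 ht1I.2⟩
    have hside1 := sideBound Nf e hG1 hg10 hg1iso hγiso hs1 hsw
      (by rw [Set.uIcc_of_le h1w] at hslim1 ⊢; exact hslim1) hD10 hB0 hwit1' hup1 hlow1
    have hlow2 : ∀ u ∈ Set.Icc t2 b, min ψw ψ2 - B ≤ φ u := by
      intro u huI
      have hmm : min ψw ψ2 ≤ ψw := min_le_left _ _
      rcases eq_or_lt_of_le huI.1 with h | h
      · rw [← h]
        simp only [hBdef]
        linarith only [ht2lo, hVq2, hmm, hΛ0]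
      · have h6 := ht2side u ⟨le_trans ht2I.1 huI.1, huI.2⟩ h
        simp only [hBdef]
        linarith only [h6, hVq2, hmm, hΛ0, hεh0]
    have hup2 : ∀ u ∈ Set.Icc t2 b, φ u ≤ max ψw ψ2 + B := by
      intro u huI
      exact hupB u ⟨le_trans ht2I.1 huI.1, huI.2⟩
    have hwit2' : ∀ u ∈ Set.Icc t2 b, ∃ r, r ∈ Set.Icc 0 G2 ∧
        dist (σb u) (g2 r) ≤ cD1 Nf lam eps ∧ |r - φ u| ≤ cD1 Nf lam eps :=
      fun u huI => hwitB u ⟨le_trans ht2I.1 huI.1, huI.2⟩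
    have hside2 := sideBound Nf e hG2 hg20 hg2iso hγiso hsw hs2
      (by rw [Set.uIcc_of_le hw2] at hslim2 ⊢; exact hslim2) hD10 hB0 hwit2' hup2 hlow2
    intro t htI
    have hQ2fin : cQ2 Nf lam eps + cM Nf ≤ cN' Nf lam eps := by
      simp only [cN']
      have h1 := cD_ge_one Nf (lam := lam) (eps := eps)
      linarith only [h1, hΛ0, hM0, hεh0]
    rcases le_total t t1 with h | h
    · have hb1 := hside1 t ⟨htI.1, h⟩
      have hb2 := hconv t htI
      linarith only [hb1, hb2, hfinal]
    · rcases le_total t t2 with h' | h'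
      · have h6 : Metric.infDist (σb t) (γ '' Set.Icc 0 L) ≤ cQ2 Nf lam eps :=
          le_trans (Metric.infDist_le_dist_of_mem ⟨sw, hsw, rfl⟩) (hmid t ⟨h, h'⟩)
        have hb2 := hconv t htI
        linarith only [h6, hb2, hQ2fin]
      · have hb1 := hside2 t ⟨h', htI.2⟩
        have hb2 := hconv t htI
        linarith only [hb1, hb2, hfinal]

set_option maxHeartbeats 1000000 in
theorem key (Nf : ℝ → ℝ → ℝ) (hGS : GeodesicSpace X)
    (e x y : X) (hx : x ∈ stratum Nf e) (hy : y ∈ stratum Nf e) {γ : ℝ → X}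
    (hγ : IsGeodesicSegment γ x y) :
    IsMorseWith (cN' Nf) (γ '' Set.Icc 0 (dist x y)) := by
  obtain ⟨α, ⟨hα0, hαA, hαiso⟩, hαmorse⟩ := hx
  obtain ⟨β, ⟨hβ0, hβB, hβiso⟩, hβmorse⟩ := hy
  obtain ⟨hγ0, hγL, hγiso⟩ := hγ
  intro lam eps hlam heps a b hab σ hσ hpa hpb
  rcases eq_or_lt_of_le hab with heq | hab'
  · -- degenerate case a = b
    intro t htI
    have ht : t = a := le_antisymm (heq ▸ htI.2) htI.1
    rw [ht]
    have h0 : Metric.infDist (σ a) (γ '' Set.Icc 0 (dist x y)) = 0 :=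
      Metric.infDist_zero_of_mem hpa
    rw [h0]
    exact cN'_nonneg Nf hlam heps
  obtain ⟨s1, hs1I, hps1⟩ := hpa
  obtain ⟨s2, hs2I, hps2⟩ := hpb
  have hL0 : (0:ℝ) ≤ dist x y := dist_nonneg
  have hA0 : (0:ℝ) ≤ dist e x := dist_nonneg
  have hB0 : (0:ℝ) ≤ dist e y := dist_nonneg
  -- the corner: minimizer of the distance to e along γ
  have hγcont : ContinuousOn γ (Set.Icc 0 (dist x y)) := by
    have h : LipschitzOnWith 1 γ (Set.Icc 0 (dist x y)) := by
      rw [lipschitzOnWith_iff_dist_le_mul]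
      intro p hp q hq
      rw [hγiso p hp q hq, Real.dist_eq]
      simp
    exact h.continuousOn
  have hψcont : ContinuousOn (fun s => dist (γ s) e) (Set.Icc 0 (dist x y)) :=
    Continuous.comp_continuousOn (Continuous.dist continuous_id continuous_const) hγcont
  obtain ⟨sw, hswI, hswmin'⟩ := IsCompact.exists_isMinOn isCompact_Icc
    ⟨0, ⟨le_refl _, hL0⟩⟩ hψcont
  have hswmin : ∀ s ∈ Set.Icc (0:ℝ) (dist x y), dist (γ sw) e ≤ dist (γ s) e :=
    fun s hs => hswmin' hs
  -- slimness on the α side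
  have hlegα := leg hGS Nf e hA0 hα0 hαiso hαmorse (le_refl 1) (le_refl 0) hswI.1
    (geo_qg (fun p hp q hq => hγiso p (Set.Icc_subset_Icc le_rfl hswI.2 hp)
      q (Set.Icc_subset_Icc le_rfl hswI.2 hq)))
    (c0 := dist e x) ⟨hA0, le_refl _⟩ (by rw [hγ0]; exact hαA.symm)
    (fun p hp => by
      have := hswmin p (Set.Icc_subset_Icc le_rfl hswI.2 hp)
      linarith)
  have hslimα : ∀ s ∈ Set.Icc (0:ℝ) sw, ∃ r, r ∈ Set.Icc 0 (dist e x) ∧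
      dist (γ s) (α r) ≤ cM Nf := by
    intro s hs
    obtain ⟨r, h1, h2, _⟩ := hlegα s hs
    refine ⟨r, h1, ?_⟩
    have e1 : (2*(1:ℝ)+1) = 3 := by norm_num
    have e2 : ((0:ℝ)+2) = 2 := by norm_num
    rw [e1, e2] at h2
    simpa only [cM, N0] using h2
  -- slimness on the β side
  have hrevγ : IsQuasiGeodesicOn 1 0 sw (dist x y) (fun u => γ (sw + dist x y - u)) :=
    qg_reverse (geo_qg (fun p hp q hq => hγiso p (Set.Icc_subset_Icc hswI.1 le_rfl hp)
      q (Set.Icc_subset_Icc hswI.1 le_rfl hq)))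
  have hlegβ := leg hGS Nf e hB0 hβ0 hβiso hβmorse (le_refl 1) (le_refl 0) hswI.2
    hrevγ (c0 := dist e y) ⟨hB0, le_refl _⟩
    (by
      show γ (sw + dist x y - sw) = β (dist e y)
      rw [show sw + dist x y - sw = dist x y by ring, hγL]; exact hβB.symm)
    (fun p hp => by
      show dist (γ (sw + dist x y - dist x y)) e ≤ dist (γ (sw + dist x y - p)) e + 1
      rw [show sw + dist x y - dist x y = sw by ring]
      have hmem : sw + dist x y - p ∈ Set.Icc (0:ℝ) (dist x y) :=
        ⟨by linarith [hp.2, hswI.1], by linarith [hp.1, hswI.2]⟩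
      have := hswmin _ hmem
      linarith)
  have hslimβ : ∀ s ∈ Set.Icc sw (dist x y), ∃ r, r ∈ Set.Icc 0 (dist e y) ∧
      dist (γ s) (β r) ≤ cM Nf := by
    intro s hs
    have hmem : sw + dist x y - s ∈ Set.Icc sw (dist x y) :=
      ⟨by linarith [hs.2], by linarith [hs.1]⟩
    obtain ⟨r, h1, h2, _⟩ := hlegβ (sw + dist x y - s) hmem
    rw [show sw + dist x y - (sw + dist x y - s) = s by ring] at h2
    refine ⟨r, h1, ?_⟩
    have e1 : (2*(1:ℝ)+1) = 3 := by norm_num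
    have e2 : ((0:ℝ)+2) = 2 := by norm_num
    rw [e1, e2] at h2
    simpa only [cM, N0] using h2
  -- case analysis on the positions of s1, s2
  rcases le_total s1 sw with h1w | hw1
  · rcases le_total s2 sw with h2w | hw2
    · -- both on the α side
      have hsub : Set.uIcc s1 s2 ⊆ Set.Icc 0 sw :=
        Set.uIcc_subset_Icc ⟨hs1I.1, h1w⟩ ⟨hs2I.1, h2w⟩
      exact caseP Nf e hA0 hα0 hαiso hαmorse hγiso hs1I hs2I
        (fun s hs => hslimα s (hsub hs)) hlam heps hab' hσ hps1.symm hps2.symm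
    · -- mixed: s1 ≤ sw ≤ s2
      have hsub1 : Set.uIcc s1 sw ⊆ Set.Icc 0 sw :=
        Set.uIcc_subset_Icc ⟨hs1I.1, h1w⟩ ⟨hswI.1, le_refl _⟩
      have hsub2 : Set.uIcc sw s2 ⊆ Set.Icc sw (dist x y) :=
        Set.uIcc_subset_Icc ⟨le_refl _, hswI.2⟩ ⟨hw2, hs2I.2⟩
      exact caseM hGS Nf e hA0 hα0 hαiso hαmorse hB0 hβ0 hβiso hβmorse hγiso
        hs1I hswI hs2I h1w hw2
        (fun s hs => hslimα s (hsub1 hs)) (fun s hs => hslimβ s (hsub2 hs))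
        (fun s hs => hswmin s ⟨le_trans hs1I.1 hs.1, le_trans hs.2 hs2I.2⟩)
        hlam heps hab' hσ hps1.symm hps2.symm
  · rcases le_total s2 sw with h2w | hw2
    · -- mixed reversed: s2 ≤ sw ≤ s1
      have hsub1 : Set.uIcc s2 sw ⊆ Set.Icc 0 sw :=
        Set.uIcc_subset_Icc ⟨hs2I.1, h2w⟩ ⟨hswI.1, le_refl _⟩
      have hsub2 : Set.uIcc sw s1 ⊆ Set.Icc sw (dist x y) :=
        Set.uIcc_subset_Icc ⟨le_refl _, hswI.2⟩ ⟨hw1, hs1I.2⟩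
      have hrev : IsQuasiGeodesicOn lam eps a b (fun u => σ (a + b - u)) := qg_reverse hσ
      have hpa' : (fun u => σ (a + b - u)) a = γ s2 := by
        show σ (a + b - a) = γ s2
        rw [show a + b - a = b by ring, ← hps2]
      have hpb' : (fun u => σ (a + b - u)) b = γ s1 := by
        show σ (a + b - b) = γ s1
        rw [show a + b - b = a by ring, ← hps1]
      have hcm := caseM hGS Nf e hA0 hα0 hαiso hαmorse hB0 hβ0 hβiso hβmorse hγiso
        hs2I hswI hs1I h2w hw1
        (fun s hs => hslimα s (hsub1 hs)) (fun s hs => hslimβ s (hsub2 hs))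
        (fun s hs => hswmin s ⟨le_trans hs2I.1 hs.1, le_trans hs.2 hs1I.2⟩)
        hlam heps hab' hrev hpa' hpb'
      intro t htI
      have hmem : a + b - t ∈ Set.Icc a b := ⟨by linarith [htI.2], by linarith [htI.1]⟩
      have := hcm (a + b - t) hmem
      rw [show a + b - (a + b - t) = t by ring] at this
      exact this
    · -- both on the β side
      have hsub : Set.uIcc s1 s2 ⊆ Set.Icc sw (dist x y) :=
        Set.uIcc_subset_Icc ⟨hw1, hs1I.2⟩ ⟨hw2, hs2I.2⟩
      exact caseP Nf e hB0 hβ0 hβiso hβmorse hγiso hs1I hs2I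
        (fun s hs => hslimβ s (hsub hs)) hlam heps hab' hσ hps1.symm hps2.symm


end QG

end StratumStable


/-- For every Morse gauge `N` there is a gauge `N'` depending only on `N` such that in any
geodesic space, any geodesic between two points of `X_e^{(N)}` is `N'`-Morse; in
particular `X_e^{(N)}` is `N'`-stable: every pair of its points is joined by an
`N'`-Morse geodesic of `X`. -/
theorem stratum_stable (N : ℝ → ℝ → ℝ) :
    ∃ N' : ℝ → ℝ → ℝ, ∀ (X : Type) [MetricSpace X], GeodesicSpace X → ∀ e : X,
      (∀ x ∈ stratum N e, ∀ y ∈ stratum N e, ∀ γ : ℝ → X,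
        IsGeodesicSegment γ x y → IsMorseSegment N' γ x y) ∧
      (∀ x ∈ stratum N e, ∀ y ∈ stratum N e, ∃ γ : ℝ → X, IsMorseSegment N' γ x y) := by
  refine ⟨StratumStable.cN' N, fun X _ hGS e => ⟨?_, ?_⟩⟩
  · intro x hx y hy γ hγ
    exact ⟨hγ, StratumStable.key N hGS e x y hx hy hγ⟩
  · intro x hx y hy
    obtain ⟨γ, hγ⟩ := hGS x y
    exact ⟨γ, ⟨hγ, StratumStable.key N hGS e x y hx hy hγ⟩⟩
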